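/- Completeness of ctACPps+SO: for all closed ctACPps+SO process terms p and q, if p ↔ q (p and q are bisimulation equivalent) then the equation p = q is derivable from the axioms of ctACPps+SO. -/

import Mathlib

set_option autoImplicit true
set_option maxHeartbeats 1000000

/-- The three truth values of LP→⊥: true, false, both. -/
inductive V3 : Type
  | t
  | f
  | b
  deriving DecidableEq

/-- Formulas of LP→⊥ over propositional variables of type `α`. -/
inductive Fml (α : Type) : Type
  | var : α → Fml α
  | bot : Fml α
  | neg : Fml α → Fml α
  | conj : Fml α → Fml α → Fml α
  | disj : Fml α → Fml α → Fml α
  | imp : Fml α → Fml α → Fml α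

namespace Fml

/-- ⊤ abbreviates ¬⊥. -/
def top {α : Type} : Fml α := neg bot

/-- A↔B abbreviates (A→B)∧(B→A). -/
def iff' {α : Type} (A B : Fml α) : Fml α := conj (imp A B) (imp B A)

end Fml

/-- LP→⊥ truth table for negation. -/
def negT : V3 → V3
  | .f => .t
  | .t => .f
  | .b => .b

/-- LP→⊥ truth table for conjunction. -/
def conjT : V3 → V3 → V3
  | .f, _ => .f
  | _, .f => .f
  | .t, .t => .t
  | _, _ => .b

/-- LP→⊥ truth table for disjunction. -/
def disjT : V3 → V3 → V3
  | .t, _ => .t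
  | _, .t => .t
  | .f, .f => .f
  | _, _ => .b

/-- LP→⊥ truth table for implication. -/
def impT : V3 → V3 → V3
  | .f, _ => .t
  | _, y => y

/-- The LP→⊥ valuation determined by an assignment `σ` of truth values to variables. -/
def eval {α : Type} (σ : α → V3) : Fml α → V3
  | .var x => σ x
  | .bot => .f
  | .neg A => negT (eval σ A)
  | .conj A B => conjT (eval σ A) (eval σ B)
  | .disj A B => disjT (eval σ A) (eval σ B)
  | .imp A B => impT (eval σ A) (eval σ B)

/-- Logical equivalence in LP→⊥: the same value under every valuation. -/
def FEquiv {α : Type} (A B : Fml α) : Prop := ∀ σ : α → V3, eval σ A = eval σ B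

/-- `φ ∈ [⊥]`: `φ` is logically equivalent to ⊥. -/
def EqBot {α : Type} (φ : Fml α) : Prop := ∀ σ : α → V3, eval σ φ = V3.f

/-- Semantic consequence in LP→⊥ (designated values t and b). -/
def SemCons {α : Type} (Γ : Set (Fml α)) (A : Fml α) : Prop :=
  ∀ σ : α → V3, (∀ C ∈ Γ, eval σ C ≠ V3.f) → eval σ A ≠ V3.f

/-- The Hilbert system of LP→⊥, with hypotheses `Γ`. -/
inductive Hilb {α : Type} (Γ : Set (Fml α)) : Fml α → Prop
  | hyp {A : Fml α} : A ∈ Γ → Hilb Γ A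
  | mp {A B : Fml α} : Hilb Γ (A.imp B) → Hilb Γ A → Hilb Γ B
  | ax1 (A B : Fml α) : Hilb Γ (A.imp (B.imp A))
  | ax2 (A B C : Fml α) : Hilb Γ ((A.imp (B.imp C)).imp ((A.imp B).imp (A.imp C)))
  | ax3 (A B : Fml α) : Hilb Γ (((A.imp B).imp A).imp A)
  | ax4 (A : Fml α) : Hilb Γ (Fml.bot.imp A)
  | ax5 (A B : Fml α) : Hilb Γ ((A.conj B).imp A)
  | ax6 (A B : Fml α) : Hilb Γ ((A.conj B).imp B)
  | ax7 (A B : Fml α) : Hilb Γ (A.imp (B.imp (A.conj B)))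
  | ax8 (A B : Fml α) : Hilb Γ (A.imp (A.disj B))
  | ax9 (A B : Fml α) : Hilb Γ (B.imp (A.disj B))
  | ax10 (A B C : Fml α) : Hilb Γ ((A.imp C).imp ((B.imp C).imp ((A.disj B).imp C)))
  | ax11 (A : Fml α) : Hilb Γ (Fml.iff' A.neg.neg A)
  | ax12 (A B : Fml α) : Hilb Γ (Fml.iff' (A.imp B).neg (A.conj B.neg))
  | ax13 (A B : Fml α) : Hilb Γ (Fml.iff' (A.conj B).neg (A.neg.disj B.neg))
  | ax14 (A B : Fml α) : Hilb Γ (Fml.iff' (A.disj B).neg (A.neg.conj B.neg))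
  | ax15 (A : Fml α) : Hilb Γ (A.disj A.neg)

/-- The internalization (A↔B)∧(¬A↔¬B) of logical equivalence. -/
def InternEq {α : Type} (φ ψ : Fml α) : Fml α :=
  (Fml.iff' φ ψ).conj (Fml.iff' φ.neg ψ.neg)

/-- Derivable equality of propositions: the least congruence containing the
instances of axiom IMP (φ = ψ whenever ⊢ (φ↔ψ)∧(¬φ↔¬ψ)). -/
inductive PropEq {α : Type} : Fml α → Fml α → Prop
  | imp {φ ψ} : Hilb (∅ : Set (Fml α)) (InternEq φ ψ) → PropEq φ ψ
  | refl (φ) : PropEq φ φ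
  | symm {φ ψ} : PropEq φ ψ → PropEq ψ φ
  | trans {φ ψ χ} : PropEq φ ψ → PropEq ψ χ → PropEq φ χ
  | negC {φ ψ} : PropEq φ ψ → PropEq φ.neg ψ.neg
  | conjC {φ ψ φ' ψ'} : PropEq φ ψ → PropEq φ' ψ' → PropEq (φ.conj φ') (ψ.conj ψ')
  | disjC {φ ψ φ' ψ'} : PropEq φ ψ → PropEq φ' ψ' → PropEq (φ.disj φ') (ψ.disj ψ')
  | impC {φ ψ φ' ψ'} : PropEq φ ψ → PropEq φ' ψ' → PropEq (φ.imp φ') (ψ.imp ψ')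

/-- Closed ctACPps process terms (δ is `delta`, ⊗ is `nex`, `gc`/`se` are the
guarded command and signal emission, `par` is ∥, `lm` is left merge ⌊⌊,
`cm` is communication merge |, `encap H` is ∂_H). -/
inductive SPT (α Act S : Type) : Type
  | act : Act → SPT α Act S
  | delta : SPT α Act S
  | nex : SPT α Act S
  | alt : SPT α Act S → SPT α Act S → SPT α Act S
  | seq : SPT α Act S → SPT α Act S → SPT α Act S
  | gc : Fml α → SPT α Act S → SPT α Act S
  | se : Fml α → SPT α Act S → SPT α Act S
  | par : SPT α Act S → SPT α Act S → SPT α Act S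
  | lm : SPT α Act S → SPT α Act S → SPT α Act S
  | cm : SPT α Act S → SPT α Act S → SPT α Act S
  | encap : Set Act → SPT α Act S → SPT α Act S
  | st : S → SPT α Act S → SPT α Act S

/-- The constant corresponding to an element of A ∪ {δ} (encoded as `Option Act`,
with `none` standing for δ). -/
def actd {α Act S : Type} : Option Act → SPT α Act S
  | some a => .act a
  | none => .delta

section
variable {α Act S : Type}

/-- Derivable equality from the axioms of ctACPps (γ is the communication
function on A ∪ {δ}; `a | b` in the axioms stands for γ(a,b), which is the
content of axiom `CF`): the least congruence satisfying A1-A7, NE1-NE3,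
GC1-GC7, SE1-SE8, IMP, CM1-CM9 (with CM2S, CM3S), C1-C3, D1-D4,
GC8S-GC11 and SE9-SE12. -/
inductive SDeriv (γ : Option Act → Option Act → Option Act)
    (actF : Option Act → S → Option Act) (effF : Option Act → S → S)
    (sigF : S → Fml α) :
    SPT α Act S → SPT α Act S → Prop
  | refl (p : SPT α Act S) : SDeriv γ actF effF sigF p p
  | symm {p q} : SDeriv γ actF effF sigF p q → SDeriv γ actF effF sigF q p
  | trans {p q r} : SDeriv γ actF effF sigF p q → SDeriv γ actF effF sigF q r → SDeriv γ actF effF sigF p r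
  | altC {p q p' q'} : SDeriv γ actF effF sigF p q → SDeriv γ actF effF sigF p' q' → SDeriv γ actF effF sigF (.alt p p') (.alt q q')
  | seqC {p q p' q'} : SDeriv γ actF effF sigF p q → SDeriv γ actF effF sigF p' q' → SDeriv γ actF effF sigF (.seq p p') (.seq q q')
  | gcC {φ ψ p q} : PropEq φ ψ → SDeriv γ actF effF sigF p q → SDeriv γ actF effF sigF (.gc φ p) (.gc ψ q)
  | seC {φ ψ p q} : PropEq φ ψ → SDeriv γ actF effF sigF p q → SDeriv γ actF effF sigF (.se φ p) (.se ψ q)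
  | parC {p q p' q'} : SDeriv γ actF effF sigF p q → SDeriv γ actF effF sigF p' q' → SDeriv γ actF effF sigF (.par p p') (.par q q')
  | lmC {p q p' q'} : SDeriv γ actF effF sigF p q → SDeriv γ actF effF sigF p' q' → SDeriv γ actF effF sigF (.lm p p') (.lm q q')
  | cmC {p q p' q'} : SDeriv γ actF effF sigF p q → SDeriv γ actF effF sigF p' q' → SDeriv γ actF effF sigF (.cm p p') (.cm q q')
  | encapC (H : Set Act) {p q} : SDeriv γ actF effF sigF p q → SDeriv γ actF effF sigF (.encap H p) (.encap H q)
  | stC (s : S) {p q} : SDeriv γ actF effF sigF p q →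
      SDeriv γ actF effF sigF (.st s p) (.st s q)
  | A1 (x y : SPT α Act S) : SDeriv γ actF effF sigF (.alt x y) (.alt y x)
  | A2 (x y z : SPT α Act S) : SDeriv γ actF effF sigF (.alt (.alt x y) z) (.alt x (.alt y z))
  | A3 (x : SPT α Act S) : SDeriv γ actF effF sigF (.alt x x) x
  | A4 (x y z : SPT α Act S) : SDeriv γ actF effF sigF (.seq (.alt x y) z) (.alt (.seq x z) (.seq y z))
  | A5 (x y z : SPT α Act S) : SDeriv γ actF effF sigF (.seq (.seq x y) z) (.seq x (.seq y z))
  | A6 (x : SPT α Act S) : SDeriv γ actF effF sigF (.alt x .delta) x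
  | A7 (x : SPT α Act S) : SDeriv γ actF effF sigF (.seq .delta x) .delta
  | NE1 (x : SPT α Act S) : SDeriv γ actF effF sigF (.alt x .nex) .nex
  | NE2 (x : SPT α Act S) : SDeriv γ actF effF sigF (.seq .nex x) .nex
  | NE3 (a : Option Act) : SDeriv γ actF effF sigF (.seq (actd a) .nex) (.delta : SPT α Act S)
  | GC1 (x : SPT α Act S) : SDeriv γ actF effF sigF (.gc Fml.top x) x
  | GC2 (x : SPT α Act S) : SDeriv γ actF effF sigF (.gc .bot x) .delta
  | GC3 (φ : Fml α) : SDeriv γ actF effF sigF (.gc φ .delta) (.delta : SPT α Act S)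
  | GC4 (φ : Fml α) (x y : SPT α Act S) :
      SDeriv γ actF effF sigF (.gc φ (.alt x y)) (.alt (.gc φ x) (.gc φ y))
  | GC5 (φ : Fml α) (x y : SPT α Act S) : SDeriv γ actF effF sigF (.gc φ (.seq x y)) (.seq (.gc φ x) y)
  | GC6 (φ ψ : Fml α) (x : SPT α Act S) : SDeriv γ actF effF sigF (.gc φ (.gc ψ x)) (.gc (φ.conj ψ) x)
  | GC7 (φ ψ : Fml α) (x : SPT α Act S) :
      SDeriv γ actF effF sigF (.gc (φ.disj ψ) x) (.alt (.gc φ x) (.gc ψ x))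
  | SE1 (x : SPT α Act S) : SDeriv γ actF effF sigF (.se Fml.top x) x
  | SE2 (x : SPT α Act S) : SDeriv γ actF effF sigF (.se .bot x) .nex
  | SE3 (φ : Fml α) : SDeriv γ actF effF sigF (.se φ .nex) (.nex : SPT α Act S)
  | SE4 (φ : Fml α) (x y : SPT α Act S) : SDeriv γ actF effF sigF (.alt (.se φ x) y) (.se φ (.alt x y))
  | SE5 (φ : Fml α) (x y : SPT α Act S) : SDeriv γ actF effF sigF (.seq (.se φ x) y) (.se φ (.seq x y))
  | SE6 (φ ψ : Fml α) (x : SPT α Act S) : SDeriv γ actF effF sigF (.se φ (.se ψ x)) (.se (φ.conj ψ) x)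
  | SE7 (φ : Fml α) (x : SPT α Act S) : SDeriv γ actF effF sigF (.se φ (.gc φ x)) (.se φ x)
  | SE8 (φ ψ : Fml α) (x : SPT α Act S) :
      SDeriv γ actF effF sigF (.gc φ (.se ψ x)) (.se (φ.imp ψ) (.gc φ x))
  | CM1 (x y : SPT α Act S) :
      SDeriv γ actF effF sigF (.par x y) (.alt (.alt (.lm x y) (.lm y x)) (.cm x y))
  | CM2S (a : Option Act) (x : SPT α Act S) :
      SDeriv γ actF effF sigF (.lm (actd a) x) (.alt (.seq (actd a) x) (.encap Set.univ x))
  | CM3S (a : Option Act) (x y : SPT α Act S) :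
      SDeriv γ actF effF sigF (.lm (.seq (actd a) x) y)
        (.alt (.seq (actd a) (.par x y)) (.encap Set.univ y))
  | CM4 (x y z : SPT α Act S) : SDeriv γ actF effF sigF (.lm (.alt x y) z) (.alt (.lm x z) (.lm y z))
  | CM5 (a b : Option Act) (x : SPT α Act S) :
      SDeriv γ actF effF sigF (.cm (.seq (actd a) x) (actd b)) (.seq (actd (γ a b)) x)
  | CM6 (a b : Option Act) (x : SPT α Act S) :
      SDeriv γ actF effF sigF (.cm (actd a) (.seq (actd b) x)) (.seq (actd (γ a b)) x)
  | CM7 (a b : Option Act) (x y : SPT α Act S) :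
      SDeriv γ actF effF sigF (.cm (.seq (actd a) x) (.seq (actd b) y)) (.seq (actd (γ a b)) (.par x y))
  | CM8 (x y z : SPT α Act S) : SDeriv γ actF effF sigF (.cm (.alt x y) z) (.alt (.cm x z) (.cm y z))
  | CM9 (x y z : SPT α Act S) : SDeriv γ actF effF sigF (.cm x (.alt y z)) (.alt (.cm x y) (.cm x z))
  | CF (a b : Option Act) : SDeriv γ actF effF sigF (.cm (actd a) (actd b)) (actd (γ a b) : SPT α Act S)
  | C1 (a b : Option Act) :
      SDeriv γ actF effF sigF (.cm (actd a) (actd b)) (.cm (actd b) (actd a) : SPT α Act S)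
  | C2 (a b c : Option Act) :
      SDeriv γ actF effF sigF (.cm (.cm (actd a) (actd b)) (actd c))
        (.cm (actd a) (.cm (actd b) (actd c)) : SPT α Act S)
  | C3 (a : Option Act) : SDeriv γ actF effF sigF (.cm .delta (actd a)) (.delta : SPT α Act S)
  | D1 (H : Set Act) (a : Act) : a ∉ H → SDeriv γ actF effF sigF (.encap H (.act a)) (.act a)
  | D1d (H : Set Act) : SDeriv γ actF effF sigF (.encap H (.delta : SPT α Act S)) .delta
  | D2 (H : Set Act) (a : Act) : a ∈ H → SDeriv γ actF effF sigF (.encap H (.act a)) .delta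
  | D3 (H : Set Act) (x y : SPT α Act S) :
      SDeriv γ actF effF sigF (.encap H (.alt x y)) (.alt (.encap H x) (.encap H y))
  | D4 (H : Set Act) (x y : SPT α Act S) :
      SDeriv γ actF effF sigF (.encap H (.seq x y)) (.seq (.encap H x) (.encap H y))
  | GC8S (φ : Fml α) (x y : SPT α Act S) :
      SDeriv γ actF effF sigF (.lm (.gc φ x) y) (.alt (.gc φ (.lm x y)) (.encap Set.univ y))
  | GC9S (φ : Fml α) (x y : SPT α Act S) :
      SDeriv γ actF effF sigF (.cm (.gc φ x) y) (.alt (.gc φ (.cm x y)) (.encap Set.univ y))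
  | GC10S (φ : Fml α) (x y : SPT α Act S) :
      SDeriv γ actF effF sigF (.cm x (.gc φ y)) (.alt (.gc φ (.cm x y)) (.encap Set.univ x))
  | GC11 (H : Set Act) (φ : Fml α) (x : SPT α Act S) :
      SDeriv γ actF effF sigF (.encap H (.gc φ x)) (.gc φ (.encap H x))
  | SE9 (φ : Fml α) (x y : SPT α Act S) : SDeriv γ actF effF sigF (.lm (.se φ x) y) (.se φ (.lm x y))
  | SE10 (φ : Fml α) (x y : SPT α Act S) : SDeriv γ actF effF sigF (.cm (.se φ x) y) (.se φ (.cm x y))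
  | SE11 (φ : Fml α) (x y : SPT α Act S) : SDeriv γ actF effF sigF (.cm x (.se φ y)) (.se φ (.cm x y))
  | SE12 (H : Set Act) (φ : Fml α) (x : SPT α Act S) :
      SDeriv γ actF effF sigF (.encap H (.se φ x)) (.se φ (.encap H x))
  | SO1 (a : Option Act) (s : S) :
      SDeriv γ actF effF sigF (.st s (actd a)) (.se (sigF s) (actd (actF a s)))
  | SO2 (a : Option Act) (s : S) (x : SPT α Act S) :
      SDeriv γ actF effF sigF (.st s (.seq (actd a) x))
        (.se (sigF s) (.seq (actd (actF a s)) (.st (effF a s) x)))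
  | SO3 (s : S) (x y : SPT α Act S) :
      SDeriv γ actF effF sigF (.st s (.alt x y)) (.alt (.st s x) (.st s y))
  | SO4 (s : S) (φ : Fml α) (x : SPT α Act S) :
      SDeriv γ actF effF sigF (.st s (.gc φ x)) (.se (sigF s) (.gc φ (.st s x)))
  | SO5 (s : S) (φ : Fml α) (x : SPT α Act S) :
      SDeriv γ actF effF sigF (.st s (.se φ x)) (.se φ (.st s x))

/-- Basic terms (basic terms of ctBPAps, within the ctACPps syntax). -/
inductive SBasic : SPT α Act S → Prop
  | nex : SBasic (.nex : SPT α Act S)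
  | emiDelta {φ : Fml α} : ¬ EqBot φ → SBasic (.se φ .delta)
  | gcAct {φ : Fml α} (a : Act) : ¬ EqBot φ → SBasic (.gc φ (.act a))
  | gcSeq {φ : Fml α} (a : Act) {p : SPT α Act S} :
      ¬ EqBot φ → SBasic p → SBasic (.gc φ (.seq (.act a) p))
  | alt {p q : SPT α Act S} : SBasic p → SBasic q → SBasic (.alt p q)

/-- The signal (root signal) emitted by a process term. -/
def sigS (sigF : S → Fml α) : SPT α Act S → Fml α
  | .act _ => Fml.top
  | .delta => Fml.top
  | .nex => .bot
  | .alt p q => (sigS sigF p).conj (sigS sigF q)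
  | .seq p _ => sigS sigF p
  | .gc φ p => φ.imp (sigS sigF p)
  | .se φ p => φ.conj (sigS sigF p)
  | .par p q => (sigS sigF p).conj (sigS sigF q)
  | .lm p q => (sigS sigF p).conj (sigS sigF q)
  | .cm p q => (sigS sigF p).conj (sigS sigF q)
  | .encap _ p => sigS sigF p
  | .st s p => (sigS sigF p).conj (sigF s)

/-- The structural operational semantics of ctACPps: `STr γ actF effF sigF p φ a (some q)` is the
action step p –φ,a→ q and `STr γ actF effF sigF p φ a none` is the action termination p –φ,a→ √. -/
inductive STr (γ : Option Act → Option Act → Option Act)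
    (actF : Option Act → S → Option Act) (effF : Option Act → S → S)
    (sigF : S → Fml α) :
    SPT α Act S → Fml α → Act → Option (SPT α Act S) → Prop
  | act (a : Act) : STr γ actF effF sigF (.act a) Fml.top a none
  | altL {x φ a o} (y : SPT α Act S) :
      STr γ actF effF sigF x φ a o → ¬ EqBot (sigS sigF (SPT.alt x y)) → STr γ actF effF sigF (.alt x y) φ a o
  | altR {y φ a o} (x : SPT α Act S) :
      STr γ actF effF sigF y φ a o → ¬ EqBot (sigS sigF (SPT.alt x y)) → STr γ actF effF sigF (.alt x y) φ a o
  | seqT {x φ a} (y : SPT α Act S) :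
      STr γ actF effF sigF x φ a none → ¬ EqBot (sigS sigF y) → STr γ actF effF sigF (.seq x y) φ a (some y)
  | seqS {x φ a x'} (y : SPT α Act S) :
      STr γ actF effF sigF x φ a (some x') → STr γ actF effF sigF (.seq x y) φ a (some (.seq x' y))
  | gcR {x φ a o} (ψ : Fml α) :
      STr γ actF effF sigF x φ a o → ¬ EqBot (φ.conj ψ) → STr γ actF effF sigF (.gc ψ x) (φ.conj ψ) a o
  | seR {x φ a o} (ψ : Fml α) :
      STr γ actF effF sigF x φ a o → ¬ EqBot (sigS sigF (SPT.se ψ x)) → STr γ actF effF sigF (.se ψ x) φ a o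
  | parTL {x φ a} (y : SPT α Act S) :
      STr γ actF effF sigF x φ a none → ¬ EqBot (sigS sigF (SPT.par x y)) → ¬ EqBot (sigS sigF y) →
      STr γ actF effF sigF (.par x y) φ a (some y)
  | parTR (x : SPT α Act S) {y φ a} :
      STr γ actF effF sigF y φ a none → ¬ EqBot (sigS sigF (SPT.par x y)) → ¬ EqBot (sigS sigF x) →
      STr γ actF effF sigF (.par x y) φ a (some x)
  | parSL {x φ a x'} (y : SPT α Act S) :
      STr γ actF effF sigF x φ a (some x') → ¬ EqBot (sigS sigF (SPT.par x y)) →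
      ¬ EqBot (sigS sigF (SPT.par x' y)) → STr γ actF effF sigF (.par x y) φ a (some (.par x' y))
  | parSR (x : SPT α Act S) {y φ a y'} :
      STr γ actF effF sigF y φ a (some y') → ¬ EqBot (sigS sigF (SPT.par x y)) →
      ¬ EqBot (sigS sigF (SPT.par x y')) → STr γ actF effF sigF (.par x y) φ a (some (.par x y'))
  | parCTT {x y : SPT α Act S} {φ ψ a b c} :
      STr γ actF effF sigF x φ a none → STr γ actF effF sigF y ψ b none → γ (some a) (some b) = some c →
      ¬ EqBot (φ.conj ψ) → ¬ EqBot (sigS sigF (SPT.par x y)) →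
      STr γ actF effF sigF (.par x y) (φ.conj ψ) c none
  | parCTS {x y : SPT α Act S} {φ ψ a b c y'} :
      STr γ actF effF sigF x φ a none → STr γ actF effF sigF y ψ b (some y') → γ (some a) (some b) = some c →
      ¬ EqBot (φ.conj ψ) → ¬ EqBot (sigS sigF (SPT.par x y)) →
      STr γ actF effF sigF (.par x y) (φ.conj ψ) c (some y')
  | parCST {x y : SPT α Act S} {φ ψ a b c x'} :
      STr γ actF effF sigF x φ a (some x') → STr γ actF effF sigF y ψ b none → γ (some a) (some b) = some c →
      ¬ EqBot (φ.conj ψ) → ¬ EqBot (sigS sigF (SPT.par x y)) →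
      STr γ actF effF sigF (.par x y) (φ.conj ψ) c (some x')
  | parCSS {x y : SPT α Act S} {φ ψ a b c x' y'} :
      STr γ actF effF sigF x φ a (some x') → STr γ actF effF sigF y ψ b (some y') → γ (some a) (some b) = some c →
      ¬ EqBot (φ.conj ψ) → ¬ EqBot (sigS sigF (SPT.par x y)) →
      ¬ EqBot (sigS sigF (SPT.par x' y')) →
      STr γ actF effF sigF (.par x y) (φ.conj ψ) c (some (.par x' y'))
  | lmT {x φ a} (y : SPT α Act S) :
      STr γ actF effF sigF x φ a none → ¬ EqBot (sigS sigF (SPT.lm x y)) → ¬ EqBot (sigS sigF y) →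
      STr γ actF effF sigF (.lm x y) φ a (some y)
  | lmS {x φ a x'} (y : SPT α Act S) :
      STr γ actF effF sigF x φ a (some x') → ¬ EqBot (sigS sigF (SPT.lm x y)) →
      ¬ EqBot (sigS sigF (SPT.par x' y)) → STr γ actF effF sigF (.lm x y) φ a (some (.par x' y))
  | cmTT {x y : SPT α Act S} {φ ψ a b c} :
      STr γ actF effF sigF x φ a none → STr γ actF effF sigF y ψ b none → γ (some a) (some b) = some c →
      ¬ EqBot (φ.conj ψ) → ¬ EqBot (sigS sigF (SPT.cm x y)) →
      STr γ actF effF sigF (.cm x y) (φ.conj ψ) c none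
  | cmTS {x y : SPT α Act S} {φ ψ a b c y'} :
      STr γ actF effF sigF x φ a none → STr γ actF effF sigF y ψ b (some y') → γ (some a) (some b) = some c →
      ¬ EqBot (φ.conj ψ) → ¬ EqBot (sigS sigF (SPT.cm x y)) →
      STr γ actF effF sigF (.cm x y) (φ.conj ψ) c (some y')
  | cmST {x y : SPT α Act S} {φ ψ a b c x'} :
      STr γ actF effF sigF x φ a (some x') → STr γ actF effF sigF y ψ b none → γ (some a) (some b) = some c →
      ¬ EqBot (φ.conj ψ) → ¬ EqBot (sigS sigF (SPT.cm x y)) →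
      STr γ actF effF sigF (.cm x y) (φ.conj ψ) c (some x')
  | cmSS {x y : SPT α Act S} {φ ψ a b c x' y'} :
      STr γ actF effF sigF x φ a (some x') → STr γ actF effF sigF y ψ b (some y') → γ (some a) (some b) = some c →
      ¬ EqBot (φ.conj ψ) → ¬ EqBot (sigS sigF (SPT.cm x y)) →
      ¬ EqBot (sigS sigF (SPT.par x' y')) →
      STr γ actF effF sigF (.cm x y) (φ.conj ψ) c (some (.par x' y'))
  | encapR {x φ a o} (H : Set Act) :
      STr γ actF effF sigF x φ a o → a ∉ H →
      STr γ actF effF sigF (.encap H x) φ a (Option.map (SPT.encap H) o)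
  | stT {x φ a a'} (s : S) :
      STr γ actF effF sigF x φ a none → actF (some a) s = some a' →
      ¬ EqBot (sigS sigF (SPT.st s x)) →
      STr γ actF effF sigF (.st s x) φ a' none
  | stS {x φ a a' x'} (s : S) :
      STr γ actF effF sigF x φ a (some x') → actF (some a) s = some a' →
      ¬ EqBot (sigS sigF (SPT.st s x)) →
      ¬ EqBot (sigS sigF (SPT.st (effF (some a) s) x')) →
      STr γ actF effF sigF (.st s x) φ a' (some (.st (effF (some a) s) x'))

/-- Lift a relation on process terms to their optional (√-extended) targets. -/
def SOptR (R : SPT α Act S → SPT α Act S → Prop) :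
    Option (SPT α Act S) → Option (SPT α Act S) → Prop
  | none, none => True
  | some p, some q => R p q
  | _, _ => False

/-- The (one-directional) simulation conditions of a splitting bisimulation. -/
def SSim (γ : Option Act → Option Act → Option Act)
    (actF : Option Act → S → Option Act) (effF : Option Act → S → S)
    (sigF : S → Fml α)
    (R : SPT α Act S → SPT α Act S → Prop) (p q : SPT α Act S) : Prop :=
  (∀ φ a o, STr γ actF effF sigF p φ a o →
    ∀ σ : α → V3, eval σ (sigS sigF p) ≠ V3.f → eval σ φ ≠ V3.f →
      ∃ ψ o', eval σ ψ = eval σ φ ∧ STr γ actF effF sigF q ψ a o' ∧ SOptR R o o') ∧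
  FEquiv (sigS sigF p) (sigS sigF q)

/-- `R` is a bisimulation. -/
def SIsBisim (γ : Option Act → Option Act → Option Act)
    (actF : Option Act → S → Option Act) (effF : Option Act → S → S)
    (sigF : S → Fml α)
    (R : SPT α Act S → SPT α Act S → Prop) : Prop :=
  ∀ p q, R p q → SSim γ actF effF sigF R p q ∧
    SSim γ actF effF sigF (fun u v => R v u) q p

/-- Bisimulation equivalence. -/
def SBisim (γ : Option Act → Option Act → Option Act)
    (actF : Option Act → S → Option Act) (effF : Option Act → S → S)
    (sigF : S → Fml α) (p q : SPT α Act S) : Prop :=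
  ∃ R, SIsBisim γ actF effF sigF R ∧ R p q

end


/-! ### Auxiliary material: Hilbert calculus toolkit and completeness of LP→⊥ -/

namespace CtAux

open Fml

variable {α : Type}

theorem hilb_mono {Γ Γ' : Set (Fml α)} (hs : Γ ⊆ Γ') {A : Fml α} (h : Hilb Γ A) :
    Hilb Γ' A := by
  induction h with
  | hyp h => exact .hyp (hs h)
  | mp _ _ ih1 ih2 => exact .mp ih1 ih2
  | ax1 A B => exact .ax1 A B
  | ax2 A B C => exact .ax2 A B C
  | ax3 A B => exact .ax3 A B
  | ax4 A => exact .ax4 A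
  | ax5 A B => exact .ax5 A B
  | ax6 A B => exact .ax6 A B
  | ax7 A B => exact .ax7 A B
  | ax8 A B => exact .ax8 A B
  | ax9 A B => exact .ax9 A B
  | ax10 A B C => exact .ax10 A B C
  | ax11 A => exact .ax11 A
  | ax12 A B => exact .ax12 A B
  | ax13 A B => exact .ax13 A B
  | ax14 A B => exact .ax14 A B
  | ax15 A => exact .ax15 A

theorem hilb_id {Γ : Set (Fml α)} (A : Fml α) : Hilb Γ (A.imp A) :=
  .mp (.mp (.ax2 A (A.imp A) A) (.ax1 A (A.imp A))) (.ax1 A A)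

theorem deduction {Γ : Set (Fml α)} {A B : Fml α} (h : Hilb (insert A Γ) B) :
    Hilb Γ (A.imp B) := by
  induction h with
  | hyp h =>
    rcases h with h | h
    · subst h; exact hilb_id _
    · exact .mp (.ax1 _ _) (.hyp h)
  | mp _ _ ih1 ih2 => exact .mp (.mp (.ax2 _ _ _) ih1) ih2
  | ax1 X Y => exact .mp (.ax1 _ _) (.ax1 X Y)
  | ax2 X Y Z => exact .mp (.ax1 _ _) (.ax2 X Y Z)
  | ax3 X Y => exact .mp (.ax1 _ _) (.ax3 X Y)
  | ax4 X => exact .mp (.ax1 _ _) (.ax4 X)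
  | ax5 X Y => exact .mp (.ax1 _ _) (.ax5 X Y)
  | ax6 X Y => exact .mp (.ax1 _ _) (.ax6 X Y)
  | ax7 X Y => exact .mp (.ax1 _ _) (.ax7 X Y)
  | ax8 X Y => exact .mp (.ax1 _ _) (.ax8 X Y)
  | ax9 X Y => exact .mp (.ax1 _ _) (.ax9 X Y)
  | ax10 X Y Z => exact .mp (.ax1 _ _) (.ax10 X Y Z)
  | ax11 X => exact .mp (.ax1 _ _) (.ax11 X)
  | ax12 X Y => exact .mp (.ax1 _ _) (.ax12 X Y)
  | ax13 X Y => exact .mp (.ax1 _ _) (.ax13 X Y)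
  | ax14 X Y => exact .mp (.ax1 _ _) (.ax14 X Y)
  | ax15 X => exact .mp (.ax1 _ _) (.ax15 X)

theorem hilb_ins {Γ : Set (Fml α)} (A : Fml α) {B : Fml α} (h : Hilb Γ B) :
    Hilb (insert A Γ) B :=
  hilb_mono (Set.subset_insert _ _) h

theorem hyp0 {Γ : Set (Fml α)} (A : Fml α) : Hilb (insert A Γ) A :=
  .hyp (Set.mem_insert _ _)

theorem imp_trans {Γ : Set (Fml α)} {A B C : Fml α}
    (h1 : Hilb Γ (A.imp B)) (h2 : Hilb Γ (B.imp C)) : Hilb Γ (A.imp C) :=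
  deduction (.mp (hilb_ins _ h2) (.mp (hilb_ins _ h1) (hyp0 _)))

theorem conj_intro {Γ : Set (Fml α)} {A B : Fml α}
    (h1 : Hilb Γ A) (h2 : Hilb Γ B) : Hilb Γ (A.conj B) :=
  .mp (.mp (.ax7 A B) h1) h2

theorem conj_left {Γ : Set (Fml α)} {A B : Fml α} (h : Hilb Γ (A.conj B)) : Hilb Γ A :=
  .mp (.ax5 A B) h

theorem conj_right {Γ : Set (Fml α)} {A B : Fml α} (h : Hilb Γ (A.conj B)) : Hilb Γ B :=
  .mp (.ax6 A B) h

theorem disj_elim {Γ : Set (Fml α)} {A B C : Fml α} (h : Hilb Γ (A.disj B))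
    (h1 : Hilb Γ (A.imp C)) (h2 : Hilb Γ (B.imp C)) : Hilb Γ C :=
  .mp (.mp (.mp (.ax10 A B C) h1) h2) h

theorem iff_mp {Γ : Set (Fml α)} {A B : Fml α} (h : Hilb Γ (Fml.iff' A B)) :
    Hilb Γ (A.imp B) := conj_left h

theorem iff_mpr {Γ : Set (Fml α)} {A B : Fml α} (h : Hilb Γ (Fml.iff' A B)) :
    Hilb Γ (B.imp A) := conj_right h

/-- A ∨ (A → ⊥). -/
theorem tertium {Γ : Set (Fml α)} (A : Fml α) : Hilb Γ (A.disj (A.imp .bot)) := by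
  apply Hilb.mp (.ax3 (A.disj (A.imp .bot)) .bot)
  apply deduction
  refine .mp (.ax9 A (A.imp .bot)) ?_
  exact imp_trans (.ax8 A (A.imp .bot)) (hyp0 _)

theorem neg_intro {Γ : Set (Fml α)} {A : Fml α} (h : Hilb Γ (A.imp .bot)) :
    Hilb Γ A.neg :=
  disj_elim (.ax15 A) (imp_trans h (.ax4 A.neg)) (hilb_id A.neg)

theorem dni {Γ : Set (Fml α)} {A : Fml α} (h : Hilb Γ A) : Hilb Γ A.neg.neg :=
  .mp (iff_mpr (.ax11 A)) h

theorem dne {Γ : Set (Fml α)} {A : Fml α} (h : Hilb Γ A.neg.neg) : Hilb Γ A :=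
  .mp (iff_mp (.ax11 A)) h

/-- The value-description formulas used in the Kalmár-style completeness proof. -/
def dv : V3 → Fml α → Fml α
  | .t, A => A.conj (A.neg.imp .bot)
  | .f, A => A.imp .bot
  | .b, A => A.conj A.neg

theorem dv_designated {Γ : Set (Fml α)} {v : V3} {A : Fml α} (hv : v ≠ .f)
    (h : Hilb Γ (dv v A)) : Hilb Γ A := by
  cases v with
  | t => exact conj_left h
  | f => exact absurd rfl hv
  | b => exact conj_left h

theorem kalmar_main (σ : α → V3) (A : Fml α) :
    Hilb {B | ∃ p, B = dv (σ p) (.var p)} (dv (eval σ A) A) := by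
  set Γ : Set (Fml α) := {B | ∃ p, B = dv (σ p) (.var p)} with hΓ
  induction A with
  | var p => exact .hyp ⟨p, rfl⟩
  | bot => exact hilb_id .bot
  | neg A ihA =>
    show Hilb Γ (dv (negT (eval σ A)) A.neg)
    cases hA : eval σ A <;> rw [hA] at ihA
    · -- A is t, ¬A is f
      exact conj_right ihA
    · -- A is f, ¬A is t
      exact conj_intro (neg_intro ihA) (imp_trans (iff_mp (.ax11 A)) ihA)
    · -- A is b
      exact conj_intro (conj_right ihA) (dni (conj_left ihA))
  | conj A B ihA ihB =>
    show Hilb Γ (dv (conjT (eval σ A) (eval σ B)) (A.conj B))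
    cases hA : eval σ A <;> cases hB : eval σ B <;> rw [hA] at ihA <;> rw [hB] at ihB
    · -- t t
      refine conj_intro (conj_intro (conj_left ihA) (conj_left ihB)) ?_
      refine imp_trans (iff_mp (.ax13 A B)) ?_
      exact .mp (.mp (.ax10 _ _ _) (conj_right ihA)) (conj_right ihB)
    · -- t f
      exact imp_trans (.ax6 A B) ihB
    · -- t b
      refine conj_intro (conj_intro (conj_left ihA) (conj_left ihB)) ?_
      exact .mp (iff_mpr (.ax13 A B)) (.mp (.ax9 A.neg B.neg) (conj_right ihB))
    · -- f t
      exact imp_trans (.ax5 A B) ihA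
    · -- f f
      exact imp_trans (.ax5 A B) ihA
    · -- f b
      exact imp_trans (.ax5 A B) ihA
    · -- b t
      refine conj_intro (conj_intro (conj_left ihA) (conj_left ihB)) ?_
      exact .mp (iff_mpr (.ax13 A B)) (.mp (.ax8 A.neg B.neg) (conj_right ihA))
    · -- b f
      exact imp_trans (.ax6 A B) ihB
    · -- b b
      refine conj_intro (conj_intro (conj_left ihA) (conj_left ihB)) ?_
      exact .mp (iff_mpr (.ax13 A B)) (.mp (.ax8 A.neg B.neg) (conj_right ihA))
  | disj A B ihA ihB =>
    show Hilb Γ (dv (disjT (eval σ A) (eval σ B)) (A.disj B))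
    cases hA : eval σ A <;> cases hB : eval σ B <;> rw [hA] at ihA <;> rw [hB] at ihB
    · -- t t
      refine conj_intro (.mp (.ax8 A B) (conj_left ihA)) ?_
      exact imp_trans (iff_mp (.ax14 A B)) (imp_trans (.ax5 A.neg B.neg) (conj_right ihA))
    · -- t f
      refine conj_intro (.mp (.ax8 A B) (conj_left ihA)) ?_
      exact imp_trans (iff_mp (.ax14 A B)) (imp_trans (.ax5 A.neg B.neg) (conj_right ihA))
    · -- t b
      refine conj_intro (.mp (.ax8 A B) (conj_left ihA)) ?_
      exact imp_trans (iff_mp (.ax14 A B)) (imp_trans (.ax5 A.neg B.neg) (conj_right ihA))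
    · -- f t
      refine conj_intro (.mp (.ax9 A B) (conj_left ihB)) ?_
      exact imp_trans (iff_mp (.ax14 A B)) (imp_trans (.ax6 A.neg B.neg) (conj_right ihB))
    · -- f f
      exact .mp (.mp (.ax10 A B .bot) ihA) ihB
    · -- f b
      refine conj_intro (.mp (.ax9 A B) (conj_left ihB)) ?_
      exact .mp (iff_mpr (.ax14 A B)) (conj_intro (neg_intro ihA) (conj_right ihB))
    · -- b t
      refine conj_intro (.mp (.ax9 A B) (conj_left ihB)) ?_
      exact imp_trans (iff_mp (.ax14 A B)) (imp_trans (.ax6 A.neg B.neg) (conj_right ihB))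
    · -- b f
      refine conj_intro (.mp (.ax8 A B) (conj_left ihA)) ?_
      exact .mp (iff_mpr (.ax14 A B)) (conj_intro (conj_right ihA) (neg_intro ihB))
    · -- b b
      refine conj_intro (.mp (.ax8 A B) (conj_left ihA)) ?_
      exact .mp (iff_mpr (.ax14 A B)) (conj_intro (conj_right ihA) (conj_right ihB))
  | imp A B ihA ihB =>
    show Hilb Γ (dv (impT (eval σ A) (eval σ B)) (A.imp B))
    cases hA : eval σ A <;> cases hB : eval σ B <;> rw [hA] at ihA <;> rw [hB] at ihB
    · -- t t
      refine conj_intro (.mp (.ax1 B A) (conj_left ihB)) ?_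
      exact imp_trans (iff_mp (.ax12 A B)) (imp_trans (.ax6 A B.neg) (conj_right ihB))
    · -- t f : A→B is f
      exact deduction (.mp (hilb_ins _ ihB) (.mp (hyp0 _) (hilb_ins _ (conj_left ihA))))
    · -- t b
      refine conj_intro (.mp (.ax1 B A) (conj_left ihB)) ?_
      exact .mp (iff_mpr (.ax12 A B)) (conj_intro (conj_left ihA) (conj_right ihB))
    · -- f t
      refine conj_intro (imp_trans ihA (.ax4 B)) ?_
      exact imp_trans (iff_mp (.ax12 A B)) (imp_trans (.ax5 A B.neg) ihA)
    · -- f f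
      refine conj_intro (imp_trans ihA (.ax4 B)) ?_
      exact imp_trans (iff_mp (.ax12 A B)) (imp_trans (.ax5 A B.neg) ihA)
    · -- f b
      refine conj_intro (imp_trans ihA (.ax4 B)) ?_
      exact imp_trans (iff_mp (.ax12 A B)) (imp_trans (.ax5 A B.neg) ihA)
    · -- b t
      refine conj_intro (.mp (.ax1 B A) (conj_left ihB)) ?_
      exact imp_trans (iff_mp (.ax12 A B)) (imp_trans (.ax6 A B.neg) (conj_right ihB))
    · -- b f
      exact deduction (.mp (hilb_ins _ ihB) (.mp (hyp0 _) (hilb_ins _ (conj_left ihA))))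
    · -- b b
      refine conj_intro (.mp (.ax1 B A) (conj_left ihB)) ?_
      exact .mp (iff_mpr (.ax12 A B)) (conj_intro (conj_left ihA) (conj_right ihB))

theorem kalmar_elim3 {Γ : Set (Fml α)} {C : Fml α} (p : α)
    (h : ∀ v, Hilb (insert (dv v (.var p)) Γ) C) : Hilb Γ C := by
  have ht : Hilb Γ ((dv .t (.var p)).imp C) := deduction (h .t)
  have hf : Hilb Γ ((dv .f (.var p)).imp C) := deduction (h .f)
  have hb : Hilb Γ ((dv .b (.var p)).imp C) := deduction (h .b)
  refine disj_elim (tertium (Fml.var p)) ?_ hf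
  apply deduction
  refine disj_elim (tertium (Fml.var p).neg) ?_ ?_
  · apply deduction
    refine .mp (hilb_ins _ (hilb_ins _ hb)) ?_
    exact conj_intro (hilb_ins _ (hyp0 _)) (hyp0 _)
  · apply deduction
    refine .mp (hilb_ins _ (hilb_ins _ ht)) ?_
    exact conj_intro (hilb_ins _ (hyp0 _)) (hyp0 _)

theorem kalmar_list (l : List α) (C : Fml α)
    (h : ∀ σ : α → V3, Hilb {B | ∃ p ∈ l, B = dv (σ p) (.var p)} C) :
    Hilb (∅ : Set (Fml α)) C := by
  classical
  induction l with
  | nil =>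
    have := h (fun _ => .t)
    refine hilb_mono ?_ this
    rintro B ⟨p, hp, _⟩
    exact absurd hp (List.not_mem_nil)
  | cons p l ih =>
    apply ih
    intro σ
    apply kalmar_elim3 p
    intro v
    have := h (fun q => if q = p then v else σ q)
    refine hilb_mono ?_ this
    rintro B ⟨q, hq, rfl⟩
    by_cases hqp : q = p
    · subst hqp; simp
    · simp only [if_neg hqp]
      rcases List.mem_cons.mp hq with h' | h'
      · exact absurd h' hqp
      · exact Set.mem_insert_iff.mpr (Or.inr ⟨q, h', rfl⟩)

theorem kalmar_complete [Fintype α] {C : Fml α}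
    (h : ∀ σ : α → V3, eval σ C ≠ .f) : Hilb (∅ : Set (Fml α)) C := by
  apply kalmar_list Finset.univ.toList C
  intro σ
  have hm := kalmar_main σ C
  have hmono : Hilb {B | ∃ p ∈ Finset.univ.toList, B = dv (σ p) (Fml.var p)}
      (dv (eval σ C) C) := by
    refine hilb_mono ?_ hm
    rintro B ⟨p, rfl⟩
    exact ⟨p, by simp, rfl⟩
  exact dv_designated (h σ) hmono

theorem propEq_of_fequiv [Fintype α] {φ ψ : Fml α} (h : FEquiv φ ψ) : PropEq φ ψ := by
  refine PropEq.imp (kalmar_complete ?_)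
  intro σ
  have hv := h σ
  unfold InternEq Fml.iff'
  simp only [eval, hv]
  cases eval σ ψ <;> simp [conjT, impT, negT]

end CtAux


namespace CtAux

attribute [local instance] Classical.propDecidable

section Proc

variable {α Act S : Type}
variable (γ : Option Act → Option Act → Option Act)
variable (actF : Option Act → S → Option Act) (effF : Option Act → S → S)
variable (sigF : S → Fml α)

local infix:50 " ⋍ " => SDeriv γ actF effF sigF

/-- Sum of a list of process terms (δ for the empty list). -/
def sumL : List (SPT α Act S) → SPT α Act S
  | [] => .delta
  | x :: xs => .alt x (sumL xs)

theorem alt_delta_left (x : SPT α Act S) : SPT.alt .delta x ⋍ x :=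
  .trans (.A1 _ _) (.A6 x)

theorem sumL_congr {l1 l2 : List (SPT α Act S)}
    (h : List.Forall₂ (SDeriv γ actF effF sigF) l1 l2) : sumL l1 ⋍ sumL l2 := by
  induction h with
  | nil => exact .refl _
  | cons h _ ih => exact .altC h ih

theorem sumL_append (l1 l2 : List (SPT α Act S)) :
    sumL (l1 ++ l2) ⋍ .alt (sumL l1) (sumL l2) := by
  induction l1 with
  | nil => exact .symm (alt_delta_left _ _ _ _ _)
  | cons x l1 ih =>
    exact .trans (.altC (.refl x) ih) (.symm (.A2 _ _ _))

theorem sumL_mem_absorb {z : SPT α Act S} {l : List (SPT α Act S)} (hz : z ∈ l) :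
    sumL l ⋍ .alt z (sumL l) := by
  induction l with
  | nil => exact absurd hz (List.not_mem_nil)
  | cons y l ih =>
    rcases List.mem_cons.mp hz with rfl | hz
    · exact .trans (.altC (.symm (.A3 z)) (.refl _)) (.A2 _ _ _)
    · refine .trans (.altC (.refl y) (ih hz)) ?_
      exact .trans (.symm (.A2 _ _ _)) (.trans (.altC (.A1 _ _) (.refl _)) (.A2 _ _ _))

theorem sum_incl {l1 l2 : List (SPT α Act S)}
    (h : ∀ z ∈ l1, ∃ w ∈ l2, z ⋍ w) :
    SPT.alt (sumL l1) (sumL l2) ⋍ sumL l2 := by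
  induction l1 with
  | nil => exact alt_delta_left _ _ _ _ _
  | cons z l1 ih =>
    refine .trans (.A2 _ _ _) ?_
    obtain ⟨w, hw, hzw⟩ := h z (List.mem_cons_self)
    refine .trans (.altC (.refl z) (ih fun u hu => h u (List.mem_cons_of_mem _ hu))) ?_
    refine .trans (.altC hzw (.refl _)) ?_
    exact .symm (sumL_mem_absorb _ _ _ _ hw)

theorem sum_ext {l1 l2 : List (SPT α Act S)}
    (h1 : ∀ z ∈ l1, ∃ w ∈ l2, z ⋍ w) (h2 : ∀ w ∈ l2, ∃ z ∈ l1, w ⋍ z) :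
    sumL l1 ⋍ sumL l2 := by
  refine .trans (.symm (sum_incl γ actF effF sigF h2)) ?_
  exact .trans (.A1 _ _) (sum_incl γ actF effF sigF h1)

/-- Propositional equality from semantic equivalence. -/
theorem propEq' [Fintype α] {φ ψ : Fml α} (h : ∀ σ : α → V3, eval σ φ = eval σ ψ) :
    PropEq φ ψ := propEq_of_fequiv h

theorem se_bot [Fintype α] {φ : Fml α} (h : EqBot φ) (x : SPT α Act S) :
    SPT.se φ x ⋍ .nex :=
  .trans (.seC (propEq' (ψ := Fml.bot) h) (.refl x)) (.SE2 x)

theorem gc_bot [Fintype α] {φ : Fml α} (h : EqBot φ) (x : SPT α Act S) :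
    SPT.gc φ x ⋍ .delta :=
  .trans (.gcC (propEq' (ψ := Fml.bot) h) (.refl x)) (.GC2 x)

theorem se_fequiv [Fintype α] {φ ψ : Fml α} (h : FEquiv φ ψ) {x y : SPT α Act S}
    (hxy : x ⋍ y) : SPT.se φ x ⋍ .se ψ y := .seC (propEq' h) hxy

theorem gc_fequiv [Fintype α] {φ ψ : Fml α} (h : FEquiv φ ψ) {x y : SPT α Act S}
    (hxy : x ⋍ y) : SPT.gc φ x ⋍ .gc ψ y := .gcC (propEq' h) hxy

/-- Distribution of right-multiplication over sums. -/
theorem seq_sumL (l : List (SPT α Act S)) (y : SPT α Act S) :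
    SPT.seq (sumL l) y ⋍ sumL (l.map (fun z => .seq z y)) := by
  induction l with
  | nil => exact .A7 y
  | cons z l ih => exact .trans (.A4 _ _ _) (.altC (.refl _) ih)

theorem gc_sumL (φ : Fml α) (l : List (SPT α Act S)) :
    SPT.gc φ (sumL l) ⋍ sumL (l.map (fun z => .gc φ z)) := by
  induction l with
  | nil => exact .GC3 φ
  | cons z l ih => exact .trans (.GC4 _ _ _) (.altC (.refl _) ih)

theorem encap_sumL (H : Set Act) (l : List (SPT α Act S)) :
    SPT.encap H (sumL l) ⋍ sumL (l.map (fun z => .encap H z)) := by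
  induction l with
  | nil => exact .D1d H
  | cons z l ih => exact .trans (.D3 _ _ _) (.altC (.refl _) ih)

theorem st_sumL (s : S) (hactdelta : ∀ s, actF none s = none) (l : List (SPT α Act S)) :
    SPT.st s (sumL l) ⋍ .alt (sumL (l.map (fun z => .st s z))) (.se (sigF s) .delta) := by
  induction l with
  | nil =>
    refine .trans (.SO1 none s) ?_
    rw [hactdelta s]
    exact .symm (alt_delta_left _ _ _ _ _)
  | cons z l ih =>
    refine .trans (.SO3 s z (sumL l)) ?_
    exact .trans (.altC (.refl _) ih) (.symm (.A2 _ _ _))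

theorem lm_sumL (l : List (SPT α Act S)) (y : SPT α Act S) :
    SPT.lm (sumL l) y ⋍ .alt (sumL (l.map (fun z => .lm z y))) (.encap Set.univ y) := by
  induction l with
  | nil =>
    refine .trans (.CM2S none y) ?_
    refine .trans (.altC (.A7 y) (.refl _)) ?_
    exact .trans (alt_delta_left _ _ _ _ _) (.symm (alt_delta_left _ _ _ _ _))
  | cons z l ih =>
    refine .trans (.CM4 _ _ _) ?_
    exact .trans (.altC (.refl _) ih) (.symm (.A2 _ _ _))

/-- The target term of a transition. -/
def tgt (a : Act) : Option (SPT α Act S) → SPT α Act S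
  | none => .act a
  | some t => .seq (.act a) t

/-- The summand corresponding to a transition. -/
def smd (z : Fml α × Act × Option (SPT α Act S)) : SPT α Act S :=
  .gc z.1 (tgt z.2.1 z.2.2)

/-- Summand-shaped processes. -/
def IsSmd (z : SPT α Act S) : Prop := ∃ w, z = smd w

theorem isSmd_smd (w : Fml α × Act × Option (SPT α Act S)) : IsSmd (smd w) := ⟨w, rfl⟩

theorem cm_delta_left (hγdelta : ∀ a, γ none a = none)
    {z : SPT α Act S} (hz : IsSmd z) : SPT.cm .delta z ⋍ .delta := by
  obtain ⟨⟨φ, a, o⟩, rfl⟩ := hz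
  have base : SPT.cm .delta (tgt a o) ⋍ .delta := by
    cases o with
    | none => exact .C3 (some a)
    | some t =>
      refine .trans (.CM6 none (some a) t) ?_
      rw [hγdelta (some a)]
      exact .A7 _
  refine .trans (.GC10S φ .delta (tgt a o)) ?_
  refine .trans (.altC (.gcC (.refl φ) base) (.D1d _)) ?_
  exact .trans (.altC (.GC3 φ) (.refl _)) (.A6 _)

theorem cm_delta_right (hγcomm : ∀ a b, γ a b = γ b a) (hγdelta : ∀ a, γ none a = none)
    {z : SPT α Act S} (hz : IsSmd z) : SPT.cm z .delta ⋍ .delta := by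
  obtain ⟨⟨φ, a, o⟩, rfl⟩ := hz
  have hγd : ∀ a, γ a none = none := fun a => (hγcomm a none).trans (hγdelta a)
  have base : SPT.cm (tgt a o) .delta ⋍ .delta := by
    cases o with
    | none =>
      refine .trans (.CF (some a) none) ?_
      rw [hγd (some a)]
      exact .refl _
    | some t =>
      refine .trans (.CM5 (some a) none t) ?_
      rw [hγd (some a)]
      exact .A7 _
  refine .trans (.GC9S φ (tgt a o) .delta) ?_
  refine .trans (.altC (.gcC (.refl φ) base) (.D1d _)) ?_
  exact .trans (.altC (.GC3 φ) (.refl _)) (.A6 _)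

theorem cm_delta_sum (hγdelta : ∀ a, γ none a = none)
    {l : List (SPT α Act S)} (hl : ∀ z ∈ l, IsSmd z) :
    SPT.cm .delta (sumL l) ⋍ .delta := by
  induction l with
  | nil => exact .C3 none
  | cons z l ih =>
    refine .trans (.CM9 _ _ _) ?_
    refine .trans (.altC (cm_delta_left γ actF effF sigF hγdelta (hl z (List.mem_cons_self)))
      (ih fun u hu => hl u (List.mem_cons_of_mem _ hu))) ?_
    exact .A6 _

theorem cm_sum_right (hγcomm : ∀ a b, γ a b = γ b a) (hγdelta : ∀ a, γ none a = none)
    {z : SPT α Act S} (hz : IsSmd z) (l : List (SPT α Act S)) :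
    SPT.cm z (sumL l) ⋍ sumL (l.map (fun w => .cm z w)) := by
  induction l with
  | nil => exact cm_delta_right γ actF effF sigF hγcomm hγdelta hz
  | cons w l ih => exact .trans (.CM9 _ _ _) (.altC (.refl _) ih)

theorem cm_sumL (hγcomm : ∀ a b, γ a b = γ b a) (hγdelta : ∀ a, γ none a = none)
    {l1 l2 : List (SPT α Act S)} (h1 : ∀ z ∈ l1, IsSmd z) (h2 : ∀ z ∈ l2, IsSmd z) :
    SPT.cm (sumL l1) (sumL l2) ⋍
      sumL (l1.flatMap (fun z => l2.map (fun w => .cm z w))) := by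
  induction l1 with
  | nil => exact cm_delta_sum γ actF effF sigF hγdelta h2
  | cons z l1 ih =>
    refine .trans (.CM8 _ _ _) ?_
    refine .trans (.altC (cm_sum_right γ actF effF sigF hγcomm hγdelta
      (h1 z (List.mem_cons_self)) l2)
      (ih fun u hu => h1 u (List.mem_cons_of_mem _ hu))) ?_
    exact .symm (sumL_append γ actF effF sigF _ _)

end Proc

end CtAux


namespace CtAux

attribute [local instance] Classical.propDecidable

section Trans

variable {α Act S : Type}
variable (γ : Option Act → Option Act → Option Act)
variable (actF : Option Act → S → Option Act) (effF : Option Act → S → S)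
variable (sigF : S → Fml α)

/-- Communication of two transitions. -/
noncomputable def commPair (z1 z2 : Fml α × Act × Option (SPT α Act S)) :
    Option (Fml α × Act × Option (SPT α Act S)) :=
  match γ (some z1.2.1) (some z2.2.1) with
  | none => none
  | some c =>
    if EqBot (z1.1.conj z2.1) then none else
    match z1.2.2, z2.2.2 with
    | none, none => some (z1.1.conj z2.1, c, none)
    | none, some y' => some (z1.1.conj z2.1, c, some y')
    | some x', none => some (z1.1.conj z2.1, c, some x')
    | some x', some y' =>
        if EqBot (sigS sigF (.par x' y')) then none
        else some (z1.1.conj z2.1, c, some (.par x' y'))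

/-- The list of transitions of a process term. -/
noncomputable def transList : SPT α Act S → List (Fml α × Act × Option (SPT α Act S))
  | .act a => [(Fml.top, a, none)]
  | .delta => []
  | .nex => []
  | .alt x y =>
      if EqBot (sigS sigF (.alt x y)) then [] else transList x ++ transList y
  | .seq x y =>
      (transList x).filterMap fun z =>
        match z with
        | (φ, a, none) => if EqBot (sigS sigF y) then none else some (φ, a, some y)
        | (φ, a, some x') => some (φ, a, some (.seq x' y))
  | .gc ψ x =>
      (transList x).filterMap fun z =>
        if EqBot (z.1.conj ψ) then none else some (z.1.conj ψ, z.2)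
  | .se ψ x => if EqBot (sigS sigF (.se ψ x)) then [] else transList x
  | .par x y =>
      if EqBot (sigS sigF (.par x y)) then [] else
        ((transList x).filterMap fun z =>
          match z with
          | (φ, a, none) => if EqBot (sigS sigF y) then none else some (φ, a, some y)
          | (φ, a, some x') => if EqBot (sigS sigF (.par x' y)) then none
              else some (φ, a, some (.par x' y)))
        ++ ((transList y).filterMap fun z =>
          match z with
          | (ψ, b, none) => if EqBot (sigS sigF x) then none else some (ψ, b, some x)
          | (ψ, b, some y') => if EqBot (sigS sigF (.par x y')) then none
              else some (ψ, b, some (.par x y')))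
        ++ ((transList x).flatMap fun z1 =>
              (transList y).filterMap fun z2 => commPair γ sigF z1 z2)
  | .lm x y =>
      if EqBot (sigS sigF (.lm x y)) then [] else
        (transList x).filterMap fun z =>
          match z with
          | (φ, a, none) => if EqBot (sigS sigF y) then none else some (φ, a, some y)
          | (φ, a, some x') => if EqBot (sigS sigF (.par x' y)) then none
              else some (φ, a, some (.par x' y))
  | .cm x y =>
      if EqBot (sigS sigF (.cm x y)) then [] else
        (transList x).flatMap fun z1 =>
          (transList y).filterMap fun z2 => commPair γ sigF z1 z2
  | .encap H x =>
      (transList x).filterMap fun z =>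
        if z.2.1 ∈ H then none else some (z.1, z.2.1, z.2.2.map (.encap H))
  | .st s x =>
      if EqBot (sigS sigF (.st s x)) then [] else
        (transList x).filterMap fun z =>
          match z with
          | (φ, a, o) =>
            match actF (some a) s with
            | none => none
            | some a' =>
              match o with
              | none => some (φ, a', none)
              | some x' =>
                  if EqBot (sigS sigF (.st (effF (some a) s) x')) then none
                  else some (φ, a', some (.st (effF (some a) s) x'))

theorem mem_of_STr {p : SPT α Act S} {φ a o} (h : STr γ actF effF sigF p φ a o) :
    (φ, a, o) ∈ transList γ actF effF sigF p := by
  induction h with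
  | act a => simp [transList]
  | altL y h hnb ih =>
    rw [transList, if_neg hnb]
    exact List.mem_append_left _ ih
  | altR x h hnb ih =>
    rw [transList, if_neg hnb]
    exact List.mem_append_right _ ih
  | seqT y h hnb ih =>
    rw [transList]
    exact List.mem_filterMap.mpr ⟨_, ih, by simp [if_neg hnb]⟩
  | seqS y h ih =>
    rw [transList]
    exact List.mem_filterMap.mpr ⟨_, ih, rfl⟩
  | gcR ψ h hnb ih =>
    rw [transList]
    exact List.mem_filterMap.mpr ⟨_, ih, by simp [if_neg hnb]⟩
  | seR ψ h hnb ih =>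
    rw [transList, if_neg hnb]
    exact ih
  | parTL y h hnb hy ih =>
    rw [transList, if_neg hnb]
    refine List.mem_append_left _ (List.mem_append_left _ ?_)
    exact List.mem_filterMap.mpr ⟨_, ih, by simp [if_neg hy]⟩
  | parTR x h hnb hx ih =>
    rw [transList, if_neg hnb]
    refine List.mem_append_left _ (List.mem_append_right _ ?_)
    exact List.mem_filterMap.mpr ⟨_, ih, by simp [if_neg hx]⟩
  | parSL y h hnb hs ih =>
    rw [transList, if_neg hnb]
    refine List.mem_append_left _ (List.mem_append_left _ ?_)
    exact List.mem_filterMap.mpr ⟨_, ih, by simp [if_neg hs]⟩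
  | parSR x h hnb hs ih =>
    rw [transList, if_neg hnb]
    refine List.mem_append_left _ (List.mem_append_right _ ?_)
    exact List.mem_filterMap.mpr ⟨_, ih, by simp [if_neg hs]⟩
  | parCTT h1 h2 hc hφψ hnb ih1 ih2 =>
    rw [transList, if_neg hnb]
    refine List.mem_append_right _ ?_
    refine List.mem_flatMap.mpr ⟨_, ih1, List.mem_filterMap.mpr ⟨_, ih2, ?_⟩⟩
    simp [commPair, hc, if_neg hφψ]
  | parCTS h1 h2 hc hφψ hnb ih1 ih2 =>
    rw [transList, if_neg hnb]
    refine List.mem_append_right _ ?_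
    refine List.mem_flatMap.mpr ⟨_, ih1, List.mem_filterMap.mpr ⟨_, ih2, ?_⟩⟩
    simp [commPair, hc, if_neg hφψ]
  | parCST h1 h2 hc hφψ hnb ih1 ih2 =>
    rw [transList, if_neg hnb]
    refine List.mem_append_right _ ?_
    refine List.mem_flatMap.mpr ⟨_, ih1, List.mem_filterMap.mpr ⟨_, ih2, ?_⟩⟩
    simp [commPair, hc, if_neg hφψ]
  | parCSS h1 h2 hc hφψ hnb hs ih1 ih2 =>
    rw [transList, if_neg hnb]
    refine List.mem_append_right _ ?_
    refine List.mem_flatMap.mpr ⟨_, ih1, List.mem_filterMap.mpr ⟨_, ih2, ?_⟩⟩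
    simp [commPair, hc, if_neg hφψ, if_neg hs]
  | lmT y h hnb hy ih =>
    rw [transList, if_neg hnb]
    exact List.mem_filterMap.mpr ⟨_, ih, by simp [if_neg hy]⟩
  | lmS y h hnb hs ih =>
    rw [transList, if_neg hnb]
    exact List.mem_filterMap.mpr ⟨_, ih, by simp [if_neg hs]⟩
  | cmTT h1 h2 hc hφψ hnb ih1 ih2 =>
    rw [transList, if_neg hnb]
    refine List.mem_flatMap.mpr ⟨_, ih1, List.mem_filterMap.mpr ⟨_, ih2, ?_⟩⟩
    simp [commPair, hc, if_neg hφψ]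
  | cmTS h1 h2 hc hφψ hnb ih1 ih2 =>
    rw [transList, if_neg hnb]
    refine List.mem_flatMap.mpr ⟨_, ih1, List.mem_filterMap.mpr ⟨_, ih2, ?_⟩⟩
    simp [commPair, hc, if_neg hφψ]
  | cmST h1 h2 hc hφψ hnb ih1 ih2 =>
    rw [transList, if_neg hnb]
    refine List.mem_flatMap.mpr ⟨_, ih1, List.mem_filterMap.mpr ⟨_, ih2, ?_⟩⟩
    simp [commPair, hc, if_neg hφψ]
  | cmSS h1 h2 hc hφψ hnb hs ih1 ih2 =>
    rw [transList, if_neg hnb]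
    refine List.mem_flatMap.mpr ⟨_, ih1, List.mem_filterMap.mpr ⟨_, ih2, ?_⟩⟩
    simp [commPair, hc, if_neg hφψ, if_neg hs]
  | encapR H h ha ih =>
    rw [transList]
    exact List.mem_filterMap.mpr ⟨_, ih, by simp [ha]⟩
  | stT s h ha hnb ih =>
    rw [transList, if_neg hnb]
    exact List.mem_filterMap.mpr ⟨_, ih, by simp [ha]⟩
  | stS s h ha hnb hs ih =>
    rw [transList, if_neg hnb]
    exact List.mem_filterMap.mpr ⟨_, ih, by simp [ha, if_neg hs]⟩

end Trans

end CtAux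


namespace CtAux

attribute [local instance] Classical.propDecidable

section Trans2

variable {α Act S : Type}
variable (γ : Option Act → Option Act → Option Act)
variable (actF : Option Act → S → Option Act) (effF : Option Act → S → S)
variable (sigF : S → Fml α)

theorem STr_of_mem : ∀ (p : SPT α Act S) {z},
    z ∈ transList γ actF effF sigF p → STr γ actF effF sigF p z.1 z.2.1 z.2.2 := by
  intro p
  induction p with
  | act a =>
    intro z hz
    simp [transList] at hz
    subst hz
    exact .act a
  | delta => intro z hz; simp [transList] at hz
  | nex => intro z hz; simp [transList] at hz
  | alt x y ihx ihy =>
    intro z hz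
    rw [transList] at hz
    by_cases hb : EqBot (sigS sigF (SPT.alt x y))
    · rw [if_pos hb] at hz; simp at hz
    · rw [if_neg hb] at hz
      rcases List.mem_append.mp hz with h | h
      · exact .altL y (ihx h) hb
      · exact .altR x (ihy h) hb
  | seq x y ihx ihy =>
    intro z hz
    rw [transList] at hz
    obtain ⟨⟨φ, a, o⟩, hw, he⟩ := List.mem_filterMap.mp hz
    obtain ⟨zφ, za, zo⟩ := z
    cases o with
    | none =>
      by_cases hy : EqBot (sigS sigF y)
      · simp [hy] at he
      · simp [hy] at he
        obtain ⟨rfl, rfl, rfl⟩ := he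
        exact .seqT y (ihx hw) hy
    | some x' =>
      simp at he
      obtain ⟨rfl, rfl, rfl⟩ := he
      exact .seqS y (ihx hw)
  | gc ψ x ihx =>
    intro z hz
    rw [transList] at hz
    obtain ⟨w, hw, he⟩ := List.mem_filterMap.mp hz
    by_cases hb : EqBot (w.1.conj ψ)
    · simp [hb] at he
    · simp [hb] at he
      subst he
      exact .gcR ψ (ihx hw) hb
  | se ψ x ihx =>
    intro z hz
    rw [transList] at hz
    by_cases hb : EqBot (sigS sigF (SPT.se ψ x))
    · rw [if_pos hb] at hz; simp at hz
    · rw [if_neg hb] at hz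
      exact .seR ψ (ihx hz) hb
  | par x y ihx ihy =>
    intro z hz
    rw [transList] at hz
    by_cases hb : EqBot (sigS sigF (SPT.par x y))
    · rw [if_pos hb] at hz; simp at hz
    · rw [if_neg hb] at hz
      obtain ⟨zφ, za, zo⟩ := z
      rcases List.mem_append.mp hz with h | h
      · rcases List.mem_append.mp h with h | h
        · obtain ⟨⟨φ, a, o⟩, hw, he⟩ := List.mem_filterMap.mp h
          cases o with
          | none =>
            by_cases hy : EqBot (sigS sigF y)
            · simp [hy] at he
            · simp [hy] at he
              obtain ⟨rfl, rfl, rfl⟩ := he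
              exact .parTL y (ihx hw) hb hy
          | some x' =>
            by_cases hs : EqBot (sigS sigF (SPT.par x' y))
            · simp [hs] at he
            · simp [hs] at he
              obtain ⟨rfl, rfl, rfl⟩ := he
              exact .parSL y (ihx hw) hb hs
        · obtain ⟨⟨ψ, b, o⟩, hw, he⟩ := List.mem_filterMap.mp h
          cases o with
          | none =>
            by_cases hx : EqBot (sigS sigF x)
            · simp [hx] at he
            · simp [hx] at he
              obtain ⟨rfl, rfl, rfl⟩ := he
              exact .parTR x (ihy hw) hb hx
          | some y' =>
            by_cases hs : EqBot (sigS sigF (SPT.par x y'))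
            · simp [hs] at he
            · simp [hs] at he
              obtain ⟨rfl, rfl, rfl⟩ := he
              exact .parSR x (ihy hw) hb hs
      · obtain ⟨⟨φ, a, o1⟩, h1, h⟩ := List.mem_flatMap.mp h
        obtain ⟨⟨ψ, b, o2⟩, h2, he⟩ := List.mem_filterMap.mp h
        unfold commPair at he
        rcases hγc : γ (some a) (some b) with _ | c <;> rw [hγc] at he
        · simp at he
        · by_cases hb2 : EqBot (φ.conj ψ)
          · simp [hb2] at he
          · cases o1 with
            | none =>
              cases o2 with
              | none =>
                simp [hb2] at he
                obtain ⟨rfl, rfl, rfl⟩ := he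
                exact .parCTT (ihx h1) (ihy h2) hγc hb2 hb
              | some y' =>
                simp [hb2] at he
                obtain ⟨rfl, rfl, rfl⟩ := he
                exact .parCTS (ihx h1) (ihy h2) hγc hb2 hb
            | some x' =>
              cases o2 with
              | none =>
                simp [hb2] at he
                obtain ⟨rfl, rfl, rfl⟩ := he
                exact .parCST (ihx h1) (ihy h2) hγc hb2 hb
              | some y' =>
                by_cases hs : EqBot (sigS sigF (SPT.par x' y'))
                · simp [hb2, hs] at he
                · simp [hb2, hs] at he
                  obtain ⟨rfl, rfl, rfl⟩ := he
                  exact .parCSS (ihx h1) (ihy h2) hγc hb2 hb hs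
  | lm x y ihx ihy =>
    intro z hz
    rw [transList] at hz
    by_cases hb : EqBot (sigS sigF (SPT.lm x y))
    · rw [if_pos hb] at hz; simp at hz
    · rw [if_neg hb] at hz
      obtain ⟨zφ, za, zo⟩ := z
      obtain ⟨⟨φ, a, o⟩, hw, he⟩ := List.mem_filterMap.mp hz
      cases o with
      | none =>
        by_cases hy : EqBot (sigS sigF y)
        · simp [hy] at he
        · simp [hy] at he
          obtain ⟨rfl, rfl, rfl⟩ := he
          exact .lmT y (ihx hw) hb hy
      | some x' =>
        by_cases hs : EqBot (sigS sigF (SPT.par x' y))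
        · simp [hs] at he
        · simp [hs] at he
          obtain ⟨rfl, rfl, rfl⟩ := he
          exact .lmS y (ihx hw) hb hs
  | cm x y ihx ihy =>
    intro z hz
    rw [transList] at hz
    by_cases hb : EqBot (sigS sigF (SPT.cm x y))
    · rw [if_pos hb] at hz; simp at hz
    · rw [if_neg hb] at hz
      obtain ⟨zφ, za, zo⟩ := z
      obtain ⟨⟨φ, a, o1⟩, h1, h⟩ := List.mem_flatMap.mp hz
      obtain ⟨⟨ψ, b, o2⟩, h2, he⟩ := List.mem_filterMap.mp h
      unfold commPair at he
      rcases hγc : γ (some a) (some b) with _ | c <;> rw [hγc] at he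
      · simp at he
      · by_cases hb2 : EqBot (φ.conj ψ)
        · simp [hb2] at he
        · cases o1 with
          | none =>
            cases o2 with
            | none =>
              simp [hb2] at he
              obtain ⟨rfl, rfl, rfl⟩ := he
              exact .cmTT (ihx h1) (ihy h2) hγc hb2 hb
            | some y' =>
              simp [hb2] at he
              obtain ⟨rfl, rfl, rfl⟩ := he
              exact .cmTS (ihx h1) (ihy h2) hγc hb2 hb
          | some x' =>
            cases o2 with
            | none =>
              simp [hb2] at he
              obtain ⟨rfl, rfl, rfl⟩ := he
              exact .cmST (ihx h1) (ihy h2) hγc hb2 hb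
            | some y' =>
              by_cases hs : EqBot (sigS sigF (SPT.par x' y'))
              · simp [hb2, hs] at he
              · simp [hb2, hs] at he
                obtain ⟨rfl, rfl, rfl⟩ := he
                exact .cmSS (ihx h1) (ihy h2) hγc hb2 hb hs
  | encap H x ihx =>
    intro z hz
    rw [transList] at hz
    obtain ⟨w, hw, he⟩ := List.mem_filterMap.mp hz
    by_cases ha : w.2.1 ∈ H
    · simp [ha] at he
    · simp [ha] at he
      subst he
      exact .encapR H (ihx hw) ha
  | st s x ihx =>
    intro z hz
    rw [transList] at hz
    by_cases hb : EqBot (sigS sigF (SPT.st s x))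
    · rw [if_pos hb] at hz; simp at hz
    · rw [if_neg hb] at hz
      obtain ⟨zφ, za, zo⟩ := z
      obtain ⟨⟨φ, a, o⟩, hw, he⟩ := List.mem_filterMap.mp hz
      rcases hact : actF (some a) s with _ | a'
      · simp [hact] at he
      · cases o with
        | none =>
          simp [hact] at he
          obtain ⟨rfl, rfl, rfl⟩ := he
          refine .stT s ?_ hact hb
          exact ihx hw
        | some x' =>
          by_cases hs : EqBot (sigS sigF (SPT.st (effF (some a) s) x'))
          · simp [hact, hs] at he
          · simp [hact, hs] at he
            obtain ⟨rfl, rfl, rfl⟩ := he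
            refine .stS s ?_ hact hb hs
            exact ihx hw

/-- Size of a process term. -/
def psize : SPT α Act S → ℕ
  | .act _ => 1
  | .delta => 1
  | .nex => 1
  | .alt x y => psize x + psize y + 1
  | .seq x y => psize x + psize y + 1
  | .gc _ x => psize x + 1
  | .se _ x => psize x + 1
  | .par x y => psize x + psize y + 1
  | .lm x y => psize x + psize y + 1
  | .cm x y => psize x + psize y + 1
  | .encap _ x => psize x + 1
  | .st _ x => psize x + 1

theorem psize_STr {p : SPT α Act S} {φ a o} (h : STr γ actF effF sigF p φ a o) :
    ∀ t, o = some t → psize t < psize p := by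
  induction h with
  | act a => intro t ht; cases ht
  | altL y _ _ ih =>
    intro t ht; have := ih t ht; simp only [psize]; omega
  | altR x _ _ ih =>
    intro t ht; have := ih t ht; simp only [psize]; omega
  | seqT y _ _ =>
    intro t ht; injection ht with ht; subst ht; simp only [psize]; omega
  | seqS y _ ih =>
    intro t ht; injection ht with ht; subst ht
    have := ih _ rfl; simp only [psize]; omega
  | gcR ψ _ _ ih => intro t ht; have := ih t ht; simp only [psize]; omega
  | seR ψ _ _ ih => intro t ht; have := ih t ht; simp only [psize]; omega
  | parTL y _ _ _ =>
    intro t ht; injection ht with ht; subst ht; simp only [psize]; omega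
  | parTR x _ _ _ =>
    intro t ht; injection ht with ht; subst ht; simp only [psize]; omega
  | parSL y _ _ _ ih =>
    intro t ht; injection ht with ht; subst ht
    have := ih _ rfl; simp only [psize]; omega
  | parSR x _ _ _ ih =>
    intro t ht; injection ht with ht; subst ht
    have := ih _ rfl; simp only [psize]; omega
  | parCTT _ _ _ _ _ ih1 ih2 => intro t ht; cases ht
  | parCTS _ _ _ _ _ ih1 ih2 =>
    intro t ht; injection ht with ht; subst ht
    have := ih2 _ rfl; simp only [psize]; omega
  | parCST _ _ _ _ _ ih1 ih2 =>
    intro t ht; injection ht with ht; subst ht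
    have := ih1 _ rfl; simp only [psize]; omega
  | parCSS _ _ _ _ _ _ ih1 ih2 =>
    intro t ht; injection ht with ht; subst ht
    have h1 := ih1 _ rfl; have h2 := ih2 _ rfl; simp only [psize]; omega
  | lmT y _ _ _ =>
    intro t ht; injection ht with ht; subst ht; simp only [psize]; omega
  | lmS y _ _ _ ih =>
    intro t ht; injection ht with ht; subst ht
    have := ih _ rfl; simp only [psize]; omega
  | cmTT _ _ _ _ _ ih1 ih2 => intro t ht; cases ht
  | cmTS _ _ _ _ _ ih1 ih2 =>
    intro t ht; injection ht with ht; subst ht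
    have := ih2 _ rfl; simp only [psize]; omega
  | cmST _ _ _ _ _ ih1 ih2 =>
    intro t ht; injection ht with ht; subst ht
    have := ih1 _ rfl; simp only [psize]; omega
  | cmSS _ _ _ _ _ _ ih1 ih2 =>
    intro t ht; injection ht with ht; subst ht
    have h1 := ih1 _ rfl; have h2 := ih2 _ rfl; simp only [psize]; omega
  | encapR H _ _ ih =>
    rename_i x φ a o _ _
    intro t ht
    cases o with
    | none => cases ht
    | some u =>
      injection ht with ht; subst ht
      have := ih u rfl; simp only [psize]; omega
  | stT s _ _ _ => intro t ht; cases ht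
  | stS s _ _ _ _ ih =>
    intro t ht; injection ht with ht; subst ht
    have := ih _ rfl; simp only [psize]; omega

end Trans2

end CtAux


namespace CtAux

attribute [local instance] Classical.propDecidable

section HnfHelpers

variable {α Act S : Type}
variable (γ : Option Act → Option Act → Option Act)
variable (actF : Option Act → S → Option Act) (effF : Option Act → S → S)
variable (sigF : S → Fml α)

local infix:50 " ⋍ " => SDeriv γ actF effF sigF

theorem feq_conj_comm (φ ψ : Fml α) : FEquiv (φ.conj ψ) (ψ.conj φ) := by
  intro σ; simp only [eval]; cases eval σ φ <;> cases eval σ ψ <;> rfl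

theorem feq_conj_idem (φ : Fml α) : FEquiv (φ.conj φ) φ := by
  intro σ; simp only [eval]; cases eval σ φ <;> rfl

theorem feq_conj_top (φ : Fml α) : FEquiv (φ.conj Fml.top) φ := by
  intro σ; simp only [eval, Fml.top]; cases eval σ φ <;> rfl

theorem feq_conj_imp (θ φ : Fml α) : FEquiv (θ.conj (φ.imp θ)) θ := by
  intro σ; simp only [eval]; cases eval σ θ <;> cases eval σ φ <;> rfl

theorem eqbot_conj_right {ψ : Fml α} (h : EqBot ψ) (φ : Fml α) : EqBot (φ.conj ψ) := by
  intro σ; simp only [eval, h σ]; cases eval σ φ <;> rfl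

theorem eqbot_conj_left {φ : Fml α} (h : EqBot φ) (ψ : Fml α) : EqBot (φ.conj ψ) := by
  intro σ; simp only [eval, h σ]; cases eval σ ψ <;> rfl

theorem eqbot_conj_comm {φ ψ : Fml α} (h : EqBot (φ.conj ψ)) : EqBot (ψ.conj φ) :=
  fun σ => (feq_conj_comm ψ φ σ).trans (h σ)

/-- Z + θ⌃δ = θ⌃Z. -/
theorem alt_se_delta (θ : Fml α) (Z : SPT α Act S) :
    SPT.alt Z (.se θ .delta) ⋍ .se θ Z := by
  refine .trans (.A1 _ _) ?_
  refine .trans (.SE4 θ .delta Z) ?_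
  exact .seC (.refl θ) (.trans (.A1 _ _) (.A6 Z))

theorem se_se_imp [Fintype α] (θ φ : Fml α) (W : SPT α Act S) :
    SPT.se θ (.se (φ.imp θ) W) ⋍ .se θ W :=
  .trans (.SE6 θ (φ.imp θ) W) (se_fequiv γ actF effF sigF (feq_conj_imp θ φ) (.refl W))

theorem se_merge [Fintype α] (Φ : Fml α) (A B : SPT α Act S) :
    SPT.alt (.se Φ A) (.se Φ B) ⋍ .se Φ (.alt A B) := by
  refine .trans (.SE4 Φ A (.se Φ B)) ?_
  refine .trans (.seC (.refl Φ) (.trans (.A1 _ _) (.SE4 Φ B A))) ?_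
  refine .trans (.SE6 Φ Φ (.alt B A)) ?_
  exact se_fequiv γ actF effF sigF (feq_conj_idem Φ) (.A1 B A)

theorem se_bot_delta [Fintype α] {φ : Fml α} (h : EqBot φ) (W : SPT α Act S) :
    SPT.se φ W ⋍ .se φ .delta :=
  .trans (se_bot γ actF effF sigF h W) (.symm (se_bot γ actF effF sigF h .delta))

theorem se_top_intro [Fintype α] {Z W : SPT α Act S} (h : Z ⋍ W) :
    Z ⋍ .se Fml.top W :=
  .trans h (.symm (.SE1 W))

theorem encap_univ_tgt (a : Act) (o : Option (SPT α Act S)) :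
    SPT.encap Set.univ (tgt a o) ⋍ .delta := by
  cases o with
  | none => exact .D2 Set.univ a (Set.mem_univ a)
  | some t =>
    refine .trans (.D4 Set.univ (.act a) t) ?_
    exact .trans (.seqC (.D2 Set.univ a (Set.mem_univ a)) (.refl _)) (.A7 _)

theorem encap_univ_smd (w : Fml α × Act × Option (SPT α Act S)) :
    SPT.encap Set.univ (smd w) ⋍ .delta := by
  obtain ⟨φ, a, o⟩ := w
  refine .trans (.GC11 Set.univ φ (tgt a o)) ?_
  exact .trans (.gcC (.refl φ) (encap_univ_tgt γ actF effF sigF a o)) (.GC3 φ)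

theorem sumL_all_delta {l : List (SPT α Act S)} (h : ∀ z ∈ l, z ⋍ .delta) :
    sumL l ⋍ .delta := by
  induction l with
  | nil => exact .refl _
  | cons z l ih =>
    refine .trans (.altC (h z (List.mem_cons_self))
      (ih fun u hu => h u (List.mem_cons_of_mem _ hu))) ?_
    exact .A6 _

/-- Given `y ⋍ hnf`-shape, ∂_A(y) is a signal-emitting deadlock. -/
theorem encap_univ_junk {y : SPT α Act S} {L : List (Fml α × Act × Option (SPT α Act S))}
    (hy : y ⋍ .se (sigS sigF y) (sumL (L.map smd))) :
    SPT.encap Set.univ y ⋍ .se (sigS sigF y) .delta := by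
  refine .trans (.encapC Set.univ hy) ?_
  refine .trans (.SE12 Set.univ _ _) ?_
  refine .seC (.refl _) ?_
  refine .trans (encap_sumL γ actF effF sigF Set.univ _) ?_
  apply sumL_all_delta
  intro z hz
  rw [List.map_map] at hz
  obtain ⟨w, _, rfl⟩ := List.mem_map.mp hz
  exact encap_univ_smd γ actF effF sigF w

/-- Key absorption lemma: rewrite a sum of summands, each of which emits θ,
dropping the deadlocked ones, underneath a signal Φ that subsumes θ. -/
theorem se_step_absorb [Fintype α] {Φ θ : Fml α} (hθ : FEquiv (Φ.conj θ) Φ)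
    {A B : Type} (g : A → Option B) (f : A → SPT α Act S) (h : B → SPT α Act S) :
    ∀ (l : List A),
      (∀ z ∈ l, (∃ w, g z = some w ∧ f z ⋍ .se θ (h w)) ∨
        (g z = none ∧ f z ⋍ .se θ .delta)) →
      ∀ X, SPT.se Φ (.alt X (sumL (l.map f))) ⋍
        .se Φ (.alt X (sumL ((l.filterMap g).map h))) := by
  intro l
  induction l with
  | nil => intro _ X; exact .refl _
  | cons z l ih =>
    intro H X
    have Hz := H z (List.mem_cons_self)
    have Hl := fun u hu => H u (List.mem_cons_of_mem _ hu)
    rcases Hz with ⟨w, hg, hz⟩ | ⟨hg, hz⟩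
    · rw [List.filterMap_cons, hg]
      -- goal: se Φ (X + (f z + S)) ⋍ se Φ (X + (h w + S'))
      refine .trans (.seC (.refl Φ) (.altC (.refl X) (.altC hz (.refl _)))) ?_
      -- reorder : X + (se θ (h w) + S) ⋍ se θ (h w) + (X + S)
      refine .trans (.seC (.refl Φ) (.trans (.symm (.A2 _ _ _))
        (.trans (.altC (.A1 _ _) (.refl _)) (.A2 _ _ _)))) ?_
      refine .trans (.seC (.refl Φ) (.SE4 θ (h w) _)) ?_
      refine .trans (.SE6 Φ θ _) ?_
      refine .trans (se_fequiv γ actF effF sigF hθ (.refl _)) ?_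
      -- se Φ (h w + (X + S)) ⋍ se Φ ((X + h w) + S)
      refine .trans (.seC (.refl Φ) (.trans (.symm (.A2 _ _ _))
        (.altC (.A1 _ _) (.refl _)))) ?_
      refine .trans (ih Hl (.alt X (h w))) ?_
      exact .seC (.refl Φ) (.A2 _ _ _)
    · rw [List.filterMap_cons, hg]
      refine .trans (.seC (.refl Φ) (.altC (.refl X) (.altC hz (.refl _)))) ?_
      refine .trans (.seC (.refl Φ) (.trans (.symm (.A2 _ _ _))
        (.trans (.altC (.A1 _ _) (.refl _)) (.A2 _ _ _)))) ?_
      refine .trans (.seC (.refl Φ) (.SE4 θ .delta _)) ?_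
      refine .trans (.SE6 Φ θ _) ?_
      refine .trans (se_fequiv γ actF effF sigF hθ (.refl _)) ?_
      refine .trans (.seC (.refl Φ) (alt_delta_left γ actF effF sigF _)) ?_
      exact ih Hl X

theorem se_flat_absorb [Fintype α] {Φ θ : Fml α} (hθ : FEquiv (Φ.conj θ) Φ)
    {A B C : Type} (g : A → B → Option C) (f : A → B → SPT α Act S)
    (h : C → SPT α Act S) (l2 : List B) :
    ∀ (l1 : List A),
      (∀ z1 ∈ l1, ∀ z2 ∈ l2, (∃ w, g z1 z2 = some w ∧ f z1 z2 ⋍ .se θ (h w)) ∨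
        (g z1 z2 = none ∧ f z1 z2 ⋍ .se θ .delta)) →
      ∀ X, SPT.se Φ (.alt X (sumL (l1.flatMap fun z1 => l2.map (f z1)))) ⋍
        .se Φ (.alt X (sumL ((l1.flatMap fun z1 => l2.filterMap (g z1)).map h))) := by
  intro l1
  induction l1 with
  | nil => intro _ X; exact .refl _
  | cons z1 l1 ih =>
    intro H X
    have Hz := H z1 (List.mem_cons_self)
    have Hl := fun u hu => H u (List.mem_cons_of_mem _ hu)
    rw [List.flatMap_cons, List.flatMap_cons, List.map_append]
    -- goal: se Φ (X + sumL (map (f z1) l2 ++ rest)) ⋍ se Φ (X + sumL (map h (filterMap (g z1) l2) ++ map h rest'))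
    refine .trans (.seC (.refl Φ) (.altC (.refl X) (sumL_append γ actF effF sigF _ _))) ?_
    refine .trans (.seC (.refl Φ) (.trans (.altC (.refl X) (.A1 _ _))
      (.symm (.A2 _ _ _)))) ?_
    -- se Φ ((X + S2) + S1)
    refine .trans (se_step_absorb γ actF effF sigF hθ (g z1) (f z1) h l2 Hz _) ?_
    -- se Φ ((X + S2) + S1') ⋍ se Φ ((X + S1') + S2)
    refine .trans (.seC (.refl Φ) (.trans (.A2 _ _ _)
      (.trans (.altC (.refl X) (.A1 _ _)) (.symm (.A2 _ _ _))))) ?_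
    refine .trans (ih Hl _) ?_
    refine .seC (.refl Φ) ?_
    refine .trans (.A2 _ _ _) ?_
    exact .altC (.refl X) (.symm (sumL_append γ actF effF sigF _ _))

/-- Corollary without the extra summand X. -/
theorem se_step_absorb' [Fintype α] {Φ θ : Fml α} (hθ : FEquiv (Φ.conj θ) Φ)
    {A B : Type} (g : A → Option B) (f : A → SPT α Act S) (h : B → SPT α Act S)
    (l : List A)
    (H : ∀ z ∈ l, (∃ w, g z = some w ∧ f z ⋍ .se θ (h w)) ∨
        (g z = none ∧ f z ⋍ .se θ .delta)) :
    SPT.se Φ (sumL (l.map f)) ⋍ .se Φ (sumL ((l.filterMap g).map h)) := by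
  refine .trans (.seC (.refl Φ) (.symm (alt_delta_left γ actF effF sigF _))) ?_
  refine .trans (se_step_absorb γ actF effF sigF hθ g f h l H .delta) ?_
  exact .seC (.refl Φ) (alt_delta_left γ actF effF sigF _)

theorem se_flat_absorb' [Fintype α] {Φ θ : Fml α} (hθ : FEquiv (Φ.conj θ) Φ)
    {A B C : Type} (g : A → B → Option C) (f : A → B → SPT α Act S)
    (h : C → SPT α Act S) (l2 : List B) (l1 : List A)
    (H : ∀ z1 ∈ l1, ∀ z2 ∈ l2, (∃ w, g z1 z2 = some w ∧ f z1 z2 ⋍ .se θ (h w)) ∨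
        (g z1 z2 = none ∧ f z1 z2 ⋍ .se θ .delta)) :
    SPT.se Φ (sumL (l1.flatMap fun z1 => l2.map (f z1))) ⋍
      .se Φ (sumL ((l1.flatMap fun z1 => l2.filterMap (g z1)).map h)) := by
  refine .trans (.seC (.refl Φ) (.symm (alt_delta_left γ actF effF sigF _))) ?_
  refine .trans (se_flat_absorb γ actF effF sigF hθ g f h l2 l1 H .delta) ?_
  exact .seC (.refl Φ) (alt_delta_left γ actF effF sigF _)

end HnfHelpers

end CtAux


namespace CtAux

attribute [local instance] Classical.propDecidable

section Hnf

variable {α Act S : Type}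
variable (γ : Option Act → Option Act → Option Act)
variable (actF : Option Act → S → Option Act) (effF : Option Act → S → S)
variable (sigF : S → Fml α)

local infix:50 " ⋍ " => SDeriv γ actF effF sigF

/-- The head normal form of a process term. -/
noncomputable def hnf (p : SPT α Act S) : SPT α Act S :=
  .se (sigS sigF p) (sumL ((transList γ actF effF sigF p).map smd))

theorem feq_conj_absorb_r (A B : Fml α) : FEquiv ((A.conj B).conj B) (A.conj B) := by
  intro σ; simp only [eval]; cases eval σ A <;> cases eval σ B <;> rfl

theorem feq_conj_absorb_l (A B : Fml α) : FEquiv ((A.conj B).conj A) (A.conj B) := by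
  intro σ; simp only [eval]; cases eval σ A <;> cases eval σ B <;> rfl

theorem lm_expand [Fintype α] {x y : SPT α Act S}
    (hx : x ⋍ hnf γ actF effF sigF x) (hy : y ⋍ hnf γ actF effF sigF y)
    (htgt : ∀ φ a x', (φ, a, some x') ∈ transList γ actF effF sigF x →
      EqBot (sigS sigF (SPT.par x' y)) → SPT.par x' y ⋍ .nex) :
    SPT.lm x y ⋍ .se ((sigS sigF x).conj (sigS sigF y))
      (sumL (((transList γ actF effF sigF x).filterMap fun z =>
        match z with
        | (φ, a, none) => if EqBot (sigS sigF y) then none else some (φ, a, some y)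
        | (φ, a, some x') => if EqBot (sigS sigF (.par x' y)) then none
            else some (φ, a, some (.par x' y))).map smd)) := by
  have hjunk : SPT.encap Set.univ y ⋍ .se (sigS sigF y) .delta :=
    encap_univ_junk γ actF effF sigF hy
  -- step 1 : expand x and distribute
  refine .trans (.lmC hx (.refl y)) ?_
  refine .trans (.SE9 _ _ _) ?_
  refine .trans (.seC (.refl _) (lm_sumL γ actF effF sigF _ y)) ?_
  rw [List.map_map]
  -- step 2 : absorb the global junk
  refine .trans (.seC (.refl _) (.altC (.refl _) hjunk)) ?_
  refine .trans (.seC (.refl _) (alt_se_delta γ actF effF sigF _ _)) ?_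
  refine .trans (.SE6 _ _ _) ?_
  -- step 3 : pointwise absorption
  refine se_step_absorb' γ actF effF sigF (feq_conj_absorb_r _ _) _ _ _ _ ?_
  intro z hz
  obtain ⟨φ, a, o⟩ := z
  cases o with
  | none =>
    have base : SPT.lm (smd (φ, a, none)) y ⋍
        .se (sigS sigF y) (.gc φ (.seq (.act a) y)) := by
      refine .trans (.GC8S φ (.act a) y) ?_
      refine .trans (.altC (.gcC (.refl φ) (.CM2S (some a) y)) hjunk) ?_
      refine .trans (.altC (.gcC (.refl φ)
        (.trans (.altC (.refl _) hjunk) (alt_se_delta γ actF effF sigF _ _))) (.refl _)) ?_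
      refine .trans (.altC (.SE8 φ _ _) (.refl _)) ?_
      refine .trans (alt_se_delta γ actF effF sigF _ _) ?_
      exact se_se_imp γ actF effF sigF _ _ _
    by_cases hYb : EqBot (sigS sigF y)
    · exact Or.inr ⟨by simp [hYb], .trans base (se_bot_delta γ actF effF sigF hYb _)⟩
    · exact Or.inl ⟨(φ, a, some y), by simp [hYb], base⟩
  | some x' =>
    have base : SPT.lm (smd (φ, a, some x')) y ⋍
        .se (sigS sigF y) (.gc φ (.seq (.act a) (.par x' y))) := by
      refine .trans (.GC8S φ _ y) ?_
      refine .trans (.altC (.gcC (.refl φ) (.CM3S (some a) x' y)) hjunk) ?_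
      refine .trans (.altC (.gcC (.refl φ)
        (.trans (.altC (.refl _) hjunk) (alt_se_delta γ actF effF sigF _ _))) (.refl _)) ?_
      refine .trans (.altC (.SE8 φ _ _) (.refl _)) ?_
      refine .trans (alt_se_delta γ actF effF sigF _ _) ?_
      exact se_se_imp γ actF effF sigF _ _ _
    by_cases hsp : EqBot (sigS sigF (SPT.par x' y))
    · refine Or.inr ⟨by simp [hsp], .trans base ?_⟩
      refine .trans (.seC (.refl _) (.gcC (.refl φ)
        (.trans (.seqC (.refl _) (htgt φ a x' hz hsp)) (.NE3 (some a))))) ?_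
      exact .seC (.refl _) (.GC3 φ)
    · exact Or.inl ⟨(φ, a, some (.par x' y)), by simp [hsp], base⟩

end Hnf

end CtAux


namespace CtAux

attribute [local instance] Classical.propDecidable

section Hnf2

variable {α Act S : Type}
variable (γ : Option Act → Option Act → Option Act)
variable (actF : Option Act → S → Option Act) (effF : Option Act → S → S)
variable (sigF : S → Fml α)

local infix:50 " ⋍ " => SDeriv γ actF effF sigF

theorem parB_expand [Fintype α] {x y : SPT α Act S}
    (hx : x ⋍ hnf γ actF effF sigF x) (hy : y ⋍ hnf γ actF effF sigF y)
    (hcomm : ∀ ψ b y', (ψ, b, some y') ∈ transList γ actF effF sigF y →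
      SPT.par y' x ⋍ .par x y')
    (htgt : ∀ ψ b y', (ψ, b, some y') ∈ transList γ actF effF sigF y →
      EqBot (sigS sigF (SPT.par x y')) → SPT.par x y' ⋍ .nex) :
    SPT.lm y x ⋍ .se ((sigS sigF x).conj (sigS sigF y))
      (sumL (((transList γ actF effF sigF y).filterMap fun z =>
        match z with
        | (ψ, b, none) => if EqBot (sigS sigF x) then none else some (ψ, b, some x)
        | (ψ, b, some y') => if EqBot (sigS sigF (.par x y')) then none
            else some (ψ, b, some (.par x y'))).map smd)) := by
  have hjunk : SPT.encap Set.univ x ⋍ .se (sigS sigF x) .delta :=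
    encap_univ_junk γ actF effF sigF hx
  refine .trans (.lmC hy (.refl x)) ?_
  refine .trans (.SE9 _ _ _) ?_
  refine .trans (.seC (.refl _) (lm_sumL γ actF effF sigF _ x)) ?_
  rw [List.map_map]
  refine .trans (.seC (.refl _) (.altC (.refl _) hjunk)) ?_
  refine .trans (.seC (.refl _) (alt_se_delta γ actF effF sigF _ _)) ?_
  refine .trans (.SE6 _ _ _) ?_
  refine .trans (se_fequiv γ actF effF sigF (feq_conj_comm _ _) (.refl _)) ?_
  refine se_step_absorb' γ actF effF sigF (feq_conj_absorb_l _ _) _ _ _ _ ?_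
  intro z hz
  obtain ⟨ψ, b, o⟩ := z
  cases o with
  | none =>
    have base : SPT.lm (smd (ψ, b, none)) x ⋍
        .se (sigS sigF x) (.gc ψ (.seq (.act b) x)) := by
      refine .trans (.GC8S ψ (.act b) x) ?_
      refine .trans (.altC (.gcC (.refl ψ) (.CM2S (some b) x)) hjunk) ?_
      refine .trans (.altC (.gcC (.refl ψ)
        (.trans (.altC (.refl _) hjunk) (alt_se_delta γ actF effF sigF _ _))) (.refl _)) ?_
      refine .trans (.altC (.SE8 ψ _ _) (.refl _)) ?_
      refine .trans (alt_se_delta γ actF effF sigF _ _) ?_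
      exact se_se_imp γ actF effF sigF _ _ _
    by_cases hXb : EqBot (sigS sigF x)
    · exact Or.inr ⟨by simp [hXb], .trans base (se_bot_delta γ actF effF sigF hXb _)⟩
    · exact Or.inl ⟨(ψ, b, some x), by simp [hXb], base⟩
  | some y' =>
    have base : SPT.lm (smd (ψ, b, some y')) x ⋍
        .se (sigS sigF x) (.gc ψ (.seq (.act b) (.par x y'))) := by
      refine .trans (.GC8S ψ _ x) ?_
      refine .trans (.altC (.gcC (.refl ψ) (.CM3S (some b) y' x)) hjunk) ?_
      refine .trans (.altC (.gcC (.refl ψ)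
        (.trans (.altC (.refl _) hjunk) (alt_se_delta γ actF effF sigF _ _))) (.refl _)) ?_
      refine .trans (.altC (.SE8 ψ _ _) (.refl _)) ?_
      refine .trans (alt_se_delta γ actF effF sigF _ _) ?_
      refine .trans (se_se_imp γ actF effF sigF _ _ _) ?_
      exact .seC (.refl _) (.gcC (.refl ψ) (.seqC (.refl _) (hcomm ψ b y' hz)))
    by_cases hsp : EqBot (sigS sigF (SPT.par x y'))
    · refine Or.inr ⟨by simp [hsp], .trans base ?_⟩
      refine .trans (.seC (.refl _) (.gcC (.refl ψ)
        (.trans (.seqC (.refl _) (htgt ψ b y' hz hsp)) (.NE3 (some b))))) ?_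
      exact .seC (.refl _) (.GC3 ψ)
    · exact Or.inl ⟨(ψ, b, some (.par x y')), by simp [hsp], base⟩

theorem cm_expand [Fintype α] (hγcomm : ∀ a b, γ a b = γ b a)
    (hγdelta : ∀ a, γ none a = none) {x y : SPT α Act S}
    (hx : x ⋍ hnf γ actF effF sigF x) (hy : y ⋍ hnf γ actF effF sigF y)
    (htgt : ∀ φ a x' ψ b y', (φ, a, some x') ∈ transList γ actF effF sigF x →
      (ψ, b, some y') ∈ transList γ actF effF sigF y →
      EqBot (sigS sigF (SPT.par x' y')) → SPT.par x' y' ⋍ .nex) :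
    SPT.cm x y ⋍ .se ((sigS sigF x).conj (sigS sigF y))
      (sumL (((transList γ actF effF sigF x).flatMap fun z1 =>
        (transList γ actF effF sigF y).filterMap fun z2 =>
          commPair γ sigF z1 z2).map smd)) := by
  refine .trans (.cmC hx hy) ?_
  refine .trans (.SE10 _ _ _) ?_
  refine .trans (.seC (.refl _) (.SE11 _ _ _)) ?_
  refine .trans (.SE6 _ _ _) ?_
  refine .trans (.seC (.refl _) (cm_sumL γ actF effF sigF hγcomm hγdelta
    (fun z hz => by
      rw [List.mem_map] at hz; obtain ⟨w, _, rfl⟩ := hz; exact isSmd_smd w)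
    (fun z hz => by
      rw [List.mem_map] at hz; obtain ⟨w, _, rfl⟩ := hz; exact isSmd_smd w))) ?_
  have el : ((transList γ actF effF sigF x).map smd).flatMap
      (fun z1 => ((transList γ actF effF sigF y).map smd).map (fun w => SPT.cm z1 w)) =
      (transList γ actF effF sigF x).flatMap
        (fun z1 => (transList γ actF effF sigF y).map
          (fun z2 => SPT.cm (smd z1) (smd z2))) := by
    rw [List.flatMap_map]
    simp only [List.map_map]
    rfl
  have eb : ((transList γ actF effF sigF x).map smd).flatMap
      (fun z1 => ((transList γ actF effF sigF y).map smd).map (fun w => SPT.cm z1 w)) =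
      ((transList γ actF effF sigF x).map smd).flatMap
      (fun z1 => ((transList γ actF effF sigF y).map smd).map (fun w => SPT.cm z1 w)) := rfl
  rw [eb, el]
  refine se_flat_absorb' γ actF effF sigF (feq_conj_top _) _ _ _ _ _ ?_
  intro z1 h1 z2 h2
  obtain ⟨φ, a, o1⟩ := z1
  obtain ⟨ψ, b, o2⟩ := z2
  have step : SPT.cm (smd (φ, a, o1)) (smd (ψ, b, o2)) ⋍
      .gc (φ.conj ψ) (.cm (tgt a o1) (tgt b o2)) := by
    refine .trans (.GC9S φ _ _) ?_
    refine .trans (.altC (.refl _) (.trans (.GC11 _ ψ _)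
      (.trans (.gcC (.refl ψ) (encap_univ_tgt γ actF effF sigF b o2)) (.GC3 ψ)))) ?_
    refine .trans (.A6 _) ?_
    refine .trans (.gcC (.refl φ) (.trans (.GC10S ψ _ _)
      (.trans (.altC (.refl _) (encap_univ_tgt γ actF effF sigF a o1)) (.A6 _)))) ?_
    exact .GC6 φ ψ _
  rcases hc : γ (some a) (some b) with _ | c
  · refine Or.inr ⟨by simp [commPair, hc], se_top_intro γ actF effF sigF (.trans step ?_)⟩
    have hdel : SPT.cm (tgt a o1) (tgt b o2) ⋍ .delta := by
      cases o1 with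
      | none =>
        cases o2 with
        | none =>
          have hcf := SDeriv.CF (γ := γ) (actF := actF) (effF := effF) (sigF := sigF)
            (some a) (some b)
          rw [hc] at hcf
          exact hcf
        | some y' =>
          have hcf := SDeriv.CM6 (γ := γ) (actF := actF) (effF := effF) (sigF := sigF)
            (some a) (some b) y'
          rw [hc] at hcf
          exact .trans hcf (.A7 _)
      | some x' =>
        cases o2 with
        | none =>
          have hcf := SDeriv.CM5 (γ := γ) (actF := actF) (effF := effF) (sigF := sigF)
            (some a) (some b) x'
          rw [hc] at hcf
          exact .trans hcf (.A7 _)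
        | some y' =>
          have hcf := SDeriv.CM7 (γ := γ) (actF := actF) (effF := effF) (sigF := sigF)
            (some a) (some b) x' y'
          rw [hc] at hcf
          exact .trans hcf (.A7 _)
    exact .trans (.gcC (.refl _) hdel) (.GC3 _)
  · by_cases hbb : EqBot (φ.conj ψ)
    · exact Or.inr ⟨by simp [commPair, hc, hbb],
        se_top_intro γ actF effF sigF (.trans step (gc_bot γ actF effF sigF hbb _))⟩
    · cases o1 with
      | none =>
        cases o2 with
        | none =>
          have hcf := SDeriv.CF (γ := γ) (actF := actF) (effF := effF) (sigF := sigF)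
            (some a) (some b)
          rw [hc] at hcf
          exact Or.inl ⟨(φ.conj ψ, c, none), by simp [commPair, hc, hbb],
            se_top_intro γ actF effF sigF (.trans step (.gcC (.refl _) hcf))⟩
        | some y' =>
          have hcf := SDeriv.CM6 (γ := γ) (actF := actF) (effF := effF) (sigF := sigF)
            (some a) (some b) y'
          rw [hc] at hcf
          exact Or.inl ⟨(φ.conj ψ, c, some y'), by simp [commPair, hc, hbb],
            se_top_intro γ actF effF sigF (.trans step (.gcC (.refl _) hcf))⟩
      | some x' =>
        cases o2 with
        | none =>
          have hcf := SDeriv.CM5 (γ := γ) (actF := actF) (effF := effF) (sigF := sigF)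
            (some a) (some b) x'
          rw [hc] at hcf
          exact Or.inl ⟨(φ.conj ψ, c, some x'), by simp [commPair, hc, hbb],
            se_top_intro γ actF effF sigF (.trans step (.gcC (.refl _) hcf))⟩
        | some y' =>
          have hcf := SDeriv.CM7 (γ := γ) (actF := actF) (effF := effF) (sigF := sigF)
            (some a) (some b) x' y'
          rw [hc] at hcf
          by_cases hsp : EqBot (sigS sigF (SPT.par x' y'))
          · refine Or.inr ⟨by simp [commPair, hc, hbb, hsp],
              se_top_intro γ actF effF sigF (.trans step ?_)⟩
            refine .trans (.gcC (.refl _) (.trans hcf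
              (.seqC (.refl _) (htgt φ a x' ψ b y' h1 h2 hsp)))) ?_
            exact .trans (.gcC (.refl _) (.NE3 (some c))) (.GC3 _)
          · exact Or.inl ⟨(φ.conj ψ, c, some (.par x' y')),
              by simp [commPair, hc, hbb, hsp],
              se_top_intro γ actF effF sigF (.trans step (.gcC (.refl _) hcf))⟩

end Hnf2

end CtAux


namespace CtAux

attribute [local instance] Classical.propDecidable

section Hnf3

variable {α Act S : Type}
variable (γ : Option Act → Option Act → Option Act)
variable (actF : Option Act → S → Option Act) (effF : Option Act → S → S)
variable (sigF : S → Fml α)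

local infix:50 " ⋍ " => SDeriv γ actF effF sigF

theorem psize_pos (p : SPT α Act S) : 1 ≤ psize p := by
  cases p <;> simp [psize]

theorem commPair_flip [Fintype α] (hγcomm : ∀ a b, γ a b = γ b a)
    {z1 z2 u : Fml α × Act × Option (SPT α Act S)}
    (hpc : ∀ x' y', z1.2.2 = some x' → z2.2.2 = some y' →
      SPT.par x' y' ⋍ .par y' x')
    (h : commPair γ sigF z1 z2 = some u) :
    ∃ u', commPair γ sigF z2 z1 = some u' ∧ smd u ⋍ smd u' := by
  obtain ⟨φ, a, o1⟩ := z1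
  obtain ⟨ψ, b, o2⟩ := z2
  rcases hc : γ (some a) (some b) with _ | c
  · simp [commPair, hc] at h
  · have hc' : γ (some b) (some a) = some c := by rw [hγcomm]; exact hc
    by_cases hbb : EqBot (φ.conj ψ)
    · simp [commPair, hc, hbb] at h
    · have hbb' : ¬ EqBot (ψ.conj φ) := fun hh => hbb (eqbot_conj_comm hh)
      cases o1 with
      | none =>
        cases o2 with
        | none =>
          simp [commPair, hc, hbb] at h
          subst h
          exact ⟨(ψ.conj φ, c, none), by simp [commPair, hc', hbb'],
            gc_fequiv γ actF effF sigF (feq_conj_comm φ ψ) (.refl _)⟩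
        | some y' =>
          simp [commPair, hc, hbb] at h
          subst h
          exact ⟨(ψ.conj φ, c, some y'), by simp [commPair, hc', hbb'],
            gc_fequiv γ actF effF sigF (feq_conj_comm φ ψ) (.refl _)⟩
      | some x' =>
        cases o2 with
        | none =>
          simp [commPair, hc, hbb] at h
          subst h
          exact ⟨(ψ.conj φ, c, some x'), by simp [commPair, hc', hbb'],
            gc_fequiv γ actF effF sigF (feq_conj_comm φ ψ) (.refl _)⟩
        | some y' =>
          by_cases hsp : EqBot (sigS sigF (SPT.par x' y'))
          · simp [commPair, hc, hbb, hsp] at h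
          · have hsp' : ¬ EqBot (sigS sigF (SPT.par y' x')) := fun hh =>
              hsp (eqbot_conj_comm hh)
            simp [commPair, hc, hbb, hsp] at h
            subst h
            refine ⟨(ψ.conj φ, c, some (.par y' x')), by simp [commPair, hc', hbb', hsp'], ?_⟩
            exact gc_fequiv γ actF effF sigF (feq_conj_comm φ ψ)
              (.seqC (.refl _) (hpc x' y' rfl rfl))

theorem grand [Fintype α] (hγcomm : ∀ a b, γ a b = γ b a)
    (hγdelta : ∀ a, γ none a = none) (hactdelta : ∀ s, actF none s = none) :
    ∀ n : ℕ, (∀ p : SPT α Act S, psize p ≤ n → p ⋍ hnf γ actF effF sigF p) ∧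
      (∀ x y : SPT α Act S, psize x + psize y < n → SPT.par x y ⋍ .par y x) := by
  intro n
  induction n with
  | zero =>
    constructor
    · intro p hp; have := psize_pos p; omega
    · intro x y h; have := psize_pos x; omega
  | succ n ih =>
    obtain ⟨ih1, ih2⟩ := ih
    have hnex : ∀ q : SPT α Act S, psize q ≤ n → EqBot (sigS sigF q) → q ⋍ .nex :=
      fun q hq hb => .trans (ih1 q hq) (se_bot γ actF effF sigF hb _)
    constructor
    · intro p hp
      cases p with
      | act a =>
        exact .trans (.symm (.SE1 _)) (.seC (.refl _)
          (.trans (.symm (.GC1 _)) (.symm (.A6 _))))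
      | delta => exact .symm (.SE1 _)
      | nex => exact .symm (.SE2 _)
      | alt x y =>
        simp only [psize] at hp
        have hx1 := psize_pos x
        have hy1 := psize_pos y
        have hx := ih1 x (by omega)
        have hy := ih1 y (by omega)
        have main : SPT.alt x y ⋍ .se ((sigS sigF x).conj (sigS sigF y))
            (.alt (sumL ((transList γ actF effF sigF x).map smd))
              (sumL ((transList γ actF effF sigF y).map smd))) := by
          refine .trans (.altC hx hy) ?_
          refine .trans (.SE4 _ _ _) ?_
          refine .trans (.seC (.refl _) (.trans (.A1 _ _) (.SE4 _ _ _))) ?_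
          refine .trans (.SE6 _ _ _) ?_
          exact .seC (.refl _) (.A1 _ _)
        by_cases hb : EqBot (sigS sigF (SPT.alt x y))
        · rw [hnf, transList, if_pos hb]
          exact .trans main (se_bot_delta γ actF effF sigF hb _)
        · rw [hnf, transList, if_neg hb, List.map_append]
          exact .trans main (.seC (.refl _) (.symm (sumL_append γ actF effF sigF _ _)))
      | seq x y =>
        simp only [psize] at hp
        have hx1 := psize_pos x
        have hy1 := psize_pos y
        have hx := ih1 x (by omega)
        rw [hnf, transList]
        refine .trans (.seqC hx (.refl y)) ?_
        refine .trans (.SE5 _ _ _) ?_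
        refine .trans (.seC (.refl _) (seq_sumL γ actF effF sigF _ y)) ?_
        rw [List.map_map]
        refine se_step_absorb' γ actF effF sigF (feq_conj_top _) _ _ _ _ ?_
        intro z hz
        obtain ⟨φ, a, o⟩ := z
        cases o with
        | none =>
          by_cases hYb : EqBot (sigS sigF y)
          · refine Or.inr ⟨by simp [hYb], se_top_intro γ actF effF sigF ?_⟩
            refine .trans (.symm (.GC5 φ (.act a) y)) ?_
            refine .trans (.gcC (.refl φ) (.seqC (.refl _) (hnex y (by omega) hYb))) ?_
            exact .trans (.gcC (.refl φ) (.NE3 (some a))) (.GC3 φ)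
          · exact Or.inl ⟨(φ, a, some y), by simp [hYb],
              se_top_intro γ actF effF sigF (.symm (.GC5 φ (.act a) y))⟩
        | some x' =>
          refine Or.inl ⟨(φ, a, some (.seq x' y)), by simp, se_top_intro γ actF effF sigF ?_⟩
          exact .trans (.symm (.GC5 φ _ y)) (.gcC (.refl φ) (.A5 _ _ _))
      | gc ψ x =>
        simp only [psize] at hp
        have hx := ih1 x (by omega)
        rw [hnf, transList]
        refine .trans (.gcC (.refl ψ) hx) ?_
        refine .trans (.SE8 ψ _ _) ?_
        refine .trans (.seC (.refl _) (gc_sumL γ actF effF sigF ψ _)) ?_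
        rw [List.map_map]
        refine se_step_absorb' γ actF effF sigF (feq_conj_top _) _ _ _ _ ?_
        intro z hz
        obtain ⟨φ, a, o⟩ := z
        by_cases hc : EqBot (φ.conj ψ)
        · refine Or.inr ⟨by simp [hc], se_top_intro γ actF effF sigF ?_⟩
          exact .trans (.GC6 ψ φ _) (gc_bot γ actF effF sigF (eqbot_conj_comm hc) _)
        · refine Or.inl ⟨(φ.conj ψ, a, o), by simp [hc], se_top_intro γ actF effF sigF ?_⟩
          exact .trans (.GC6 ψ φ _) (gc_fequiv γ actF effF sigF (feq_conj_comm ψ φ) (.refl _))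
      | se ψ x =>
        simp only [psize] at hp
        have hx := ih1 x (by omega)
        have main : SPT.se ψ x ⋍ .se (ψ.conj (sigS sigF x))
            (sumL ((transList γ actF effF sigF x).map smd)) :=
          .trans (.seC (.refl ψ) hx) (.SE6 _ _ _)
        by_cases hb : EqBot (sigS sigF (SPT.se ψ x))
        · rw [hnf, transList, if_pos hb]
          exact .trans main (se_bot_delta γ actF effF sigF hb _)
        · rw [hnf, transList, if_neg hb]
          exact main
      | par x y =>
        simp only [psize] at hp
        have hx1 := psize_pos x
        have hy1 := psize_pos y
        have hx := ih1 x (by omega)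
        have hy := ih1 y (by omega)
        have htgtx : ∀ φ a x', (φ, a, some x') ∈ transList γ actF effF sigF x →
            psize x' < psize x := fun φ a x' hm =>
          psize_STr γ actF effF sigF (STr_of_mem γ actF effF sigF x hm) x' rfl
        have htgty : ∀ ψ b y', (ψ, b, some y') ∈ transList γ actF effF sigF y →
            psize y' < psize y := fun ψ b y' hm =>
          psize_STr γ actF effF sigF (STr_of_mem γ actF effF sigF y hm) y' rfl
        have hA := lm_expand γ actF effF sigF hx hy (fun φ a x' hm hb =>
          hnex (.par x' y) (by have := htgtx φ a x' hm; simp only [psize]; omega) hb)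
        have hB := parB_expand γ actF effF sigF hx hy
          (fun ψ b y' hm => ih2 y' x (by have := htgty ψ b y' hm; omega))
          (fun ψ b y' hm hb =>
            hnex (.par x y') (by have := htgty ψ b y' hm; simp only [psize]; omega) hb)
        have hC := cm_expand γ actF effF sigF hγcomm hγdelta hx hy
          (fun φ a x' ψ b y' hm1 hm2 hb => hnex (.par x' y')
            (by have := htgtx φ a x' hm1; have := htgty ψ b y' hm2
                simp only [psize]; omega) hb)
        by_cases hb : EqBot (sigS sigF (SPT.par x y))
        · rw [hnf, transList, if_pos hb]
          refine .trans (.CM1 x y) ?_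
          refine .trans (.altC (.altC hA hB) hC) ?_
          refine .trans (.altC (se_merge γ actF effF sigF _ _ _) (.refl _)) ?_
          refine .trans (se_merge γ actF effF sigF _ _ _) ?_
          exact se_bot_delta γ actF effF sigF hb _
        · rw [hnf, transList, if_neg hb, List.map_append, List.map_append]
          refine .trans (.CM1 x y) ?_
          refine .trans (.altC (.altC hA hB) hC) ?_
          refine .trans (.altC (se_merge γ actF effF sigF _ _ _) (.refl _)) ?_
          refine .trans (se_merge γ actF effF sigF _ _ _) ?_
          refine .seC (.refl _) ?_
          exact .symm (.trans (sumL_append γ actF effF sigF _ _)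
            (.altC (sumL_append γ actF effF sigF _ _) (.refl _)))
      | lm x y =>
        simp only [psize] at hp
        have hx1 := psize_pos x
        have hy1 := psize_pos y
        have hx := ih1 x (by omega)
        have hy := ih1 y (by omega)
        have htgtx : ∀ φ a x', (φ, a, some x') ∈ transList γ actF effF sigF x →
            psize x' < psize x := fun φ a x' hm =>
          psize_STr γ actF effF sigF (STr_of_mem γ actF effF sigF x hm) x' rfl
        have hA := lm_expand γ actF effF sigF hx hy (fun φ a x' hm hb =>
          hnex (.par x' y) (by have := htgtx φ a x' hm; simp only [psize]; omega) hb)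
        by_cases hb : EqBot (sigS sigF (SPT.lm x y))
        · rw [hnf, transList, if_pos hb]
          exact .trans hA (se_bot_delta γ actF effF sigF hb _)
        · rw [hnf, transList, if_neg hb]
          exact hA
      | cm x y =>
        simp only [psize] at hp
        have hx1 := psize_pos x
        have hy1 := psize_pos y
        have hx := ih1 x (by omega)
        have hy := ih1 y (by omega)
        have htgtx : ∀ φ a x', (φ, a, some x') ∈ transList γ actF effF sigF x →
            psize x' < psize x := fun φ a x' hm =>
          psize_STr γ actF effF sigF (STr_of_mem γ actF effF sigF x hm) x' rfl
        have htgty : ∀ ψ b y', (ψ, b, some y') ∈ transList γ actF effF sigF y →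
            psize y' < psize y := fun ψ b y' hm =>
          psize_STr γ actF effF sigF (STr_of_mem γ actF effF sigF y hm) y' rfl
        have hC := cm_expand γ actF effF sigF hγcomm hγdelta hx hy
          (fun φ a x' ψ b y' hm1 hm2 hb => hnex (.par x' y')
            (by have := htgtx φ a x' hm1; have := htgty ψ b y' hm2
                simp only [psize]; omega) hb)
        by_cases hb : EqBot (sigS sigF (SPT.cm x y))
        · rw [hnf, transList, if_pos hb]
          exact .trans hC (se_bot_delta γ actF effF sigF hb _)
        · rw [hnf, transList, if_neg hb]
          exact hC
      | encap H x =>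
        simp only [psize] at hp
        have hx := ih1 x (by omega)
        rw [hnf, transList]
        refine .trans (.encapC H hx) ?_
        refine .trans (.SE12 H _ _) ?_
        refine .trans (.seC (.refl _) (encap_sumL γ actF effF sigF H _)) ?_
        rw [List.map_map]
        refine se_step_absorb' γ actF effF sigF (feq_conj_top _) _ _ _ _ ?_
        intro z hz
        obtain ⟨φ, a, o⟩ := z
        cases o with
        | none =>
          by_cases ha : a ∈ H
          · refine Or.inr ⟨by simp [ha], se_top_intro γ actF effF sigF ?_⟩
            refine .trans (.GC11 H φ _) ?_
            exact .trans (.gcC (.refl φ) (.D2 H a ha)) (.GC3 φ)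
          · refine Or.inl ⟨(φ, a, none), by simp [ha], se_top_intro γ actF effF sigF ?_⟩
            exact .trans (.GC11 H φ _) (.gcC (.refl φ) (.D1 H a ha))
        | some t =>
          by_cases ha : a ∈ H
          · refine Or.inr ⟨by simp [ha], se_top_intro γ actF effF sigF ?_⟩
            refine .trans (.GC11 H φ _) ?_
            refine .trans (.gcC (.refl φ) (.trans (.D4 H _ _)
              (.trans (.seqC (.D2 H a ha) (.refl _)) (.A7 _)))) ?_
            exact .GC3 φ
          · refine Or.inl ⟨(φ, a, some (.encap H t)), by simp [ha],
              se_top_intro γ actF effF sigF ?_⟩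
            refine .trans (.GC11 H φ _) ?_
            exact .gcC (.refl φ) (.trans (.D4 H _ _) (.seqC (.D1 H a ha) (.refl _)))
      | st s x =>
        simp only [psize] at hp
        have hx := ih1 x (by omega)
        have htgtx : ∀ φ a x', (φ, a, some x') ∈ transList γ actF effF sigF x →
            psize x' < psize x := fun φ a x' hm =>
          psize_STr γ actF effF sigF (STr_of_mem γ actF effF sigF x hm) x' rfl
        have main : ∀ (G : List (Fml α × Act × Option (SPT α Act S)) →
            List (Fml α × Act × Option (SPT α Act S))), True := fun _ => trivial
        rw [hnf, transList]
        by_cases hb : EqBot (sigS sigF (SPT.st s x))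
        case pos =>
          rw [if_pos hb]
          refine .trans (.stC s hx) ?_
          refine .trans (.SO5 s _ _) ?_
          refine .trans (.seC (.refl _) (st_sumL γ actF effF sigF s hactdelta _)) ?_
          refine .trans (.seC (.refl _) (alt_se_delta γ actF effF sigF _ _)) ?_
          refine .trans (.SE6 _ _ _) ?_
          exact se_bot_delta γ actF effF sigF hb _
        case neg =>
          rw [if_neg hb]
          refine .trans (.stC s hx) ?_
          refine .trans (.SO5 s _ _) ?_
          refine .trans (.seC (.refl _) (st_sumL γ actF effF sigF s hactdelta _)) ?_
          refine .trans (.seC (.refl _) (alt_se_delta γ actF effF sigF _ _)) ?_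
          refine .trans (.SE6 _ _ _) ?_
          rw [List.map_map]
          refine se_step_absorb' γ actF effF sigF (feq_conj_absorb_r _ _) _ _ _ _ ?_
          intro z hz
          obtain ⟨φ, a, o⟩ := z
          cases o with
          | none =>
            have base : SPT.st s (smd (φ, a, none)) ⋍
                .se (sigF s) (.gc φ (actd (actF (some a) s))) := by
              refine .trans (.SO4 s φ _) ?_
              refine .trans (.seC (.refl _) (.gcC (.refl φ) (.SO1 (some a) s))) ?_
              refine .trans (.seC (.refl _) (.SE8 φ _ _)) ?_
              exact se_se_imp γ actF effF sigF _ _ _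
            rcases hact : actF (some a) s with _ | a'
            · rw [hact] at base
              refine Or.inr ⟨by simp [hact], .trans base ?_⟩
              exact .seC (.refl _) (.GC3 φ)
            · rw [hact] at base
              exact Or.inl ⟨(φ, a', none), by simp [hact], base⟩
          | some x' =>
            have base : SPT.st s (smd (φ, a, some x')) ⋍
                .se (sigF s) (.gc φ (.seq (actd (actF (some a) s))
                  (.st (effF (some a) s) x'))) := by
              refine .trans (.SO4 s φ _) ?_
              refine .trans (.seC (.refl _) (.gcC (.refl φ) (.SO2 (some a) s x'))) ?_
              refine .trans (.seC (.refl _) (.SE8 φ _ _)) ?_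
              exact se_se_imp γ actF effF sigF _ _ _
            rcases hact : actF (some a) s with _ | a'
            · rw [hact] at base
              refine Or.inr ⟨by simp [hact], .trans base ?_⟩
              exact .seC (.refl _) (.trans (.gcC (.refl φ) (.A7 _)) (.GC3 φ))
            · rw [hact] at base
              by_cases hsb : EqBot (sigS sigF (SPT.st (effF (some a) s) x'))
              · refine Or.inr ⟨by simp [hact, hsb], .trans base ?_⟩
                have hxnex : SPT.st (effF (some a) s) x' ⋍ .nex :=
                  hnex _ (by have := htgtx φ a x' hz; simp only [psize]; omega) hsb
                refine .trans (.seC (.refl _) (.gcC (.refl φ)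
                  (.trans (.seqC (.refl _) hxnex) (.NE3 (some a'))))) ?_
                exact .seC (.refl _) (.GC3 φ)
              · exact Or.inl ⟨(φ, a', some (.st (effF (some a) s) x')),
                  by simp [hact, hsb], base⟩
    · intro x y hxy
      have hx1 := psize_pos x
      have hy1 := psize_pos y
      have hx := ih1 x (by omega)
      have hy := ih1 y (by omega)
      have htgtx : ∀ φ a x', (φ, a, some x') ∈ transList γ actF effF sigF x →
          psize x' < psize x := fun φ a x' hm =>
        psize_STr γ actF effF sigF (STr_of_mem γ actF effF sigF x hm) x' rfl
      have htgty : ∀ ψ b y', (ψ, b, some y') ∈ transList γ actF effF sigF y →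
          psize y' < psize y := fun ψ b y' hm =>
        psize_STr γ actF effF sigF (STr_of_mem γ actF effF sigF y hm) y' rfl
      have hcxy := cm_expand γ actF effF sigF hγcomm hγdelta hx hy
        (fun φ a x' ψ b y' hm1 hm2 hb => hnex (.par x' y')
          (by have := htgtx φ a x' hm1; have := htgty ψ b y' hm2
              simp only [psize]; omega) hb)
      have hcyx := cm_expand γ actF effF sigF hγcomm hγdelta hy hx
        (fun ψ b y' φ a x' hm2 hm1 hb => hnex (.par y' x')
          (by have := htgtx φ a x' hm1; have := htgty ψ b y' hm2
              simp only [psize]; omega) hb)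
      have hmid : SPT.se ((sigS sigF x).conj (sigS sigF y))
          (sumL (((transList γ actF effF sigF x).flatMap fun z1 =>
            (transList γ actF effF sigF y).filterMap fun z2 =>
              commPair γ sigF z1 z2).map smd)) ⋍
          .se ((sigS sigF y).conj (sigS sigF x))
          (sumL (((transList γ actF effF sigF y).flatMap fun z1 =>
            (transList γ actF effF sigF x).filterMap fun z2 =>
              commPair γ sigF z1 z2).map smd)) := by
        refine se_fequiv γ actF effF sigF (feq_conj_comm _ _) ?_
        refine sum_ext γ actF effF sigF ?_ ?_
        · intro z hz
          obtain ⟨u, hu, rfl⟩ := List.mem_map.mp hz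
          obtain ⟨z1, hz1, hu2⟩ := List.mem_flatMap.mp hu
          obtain ⟨z2, hz2, hcp⟩ := List.mem_filterMap.mp hu2
          obtain ⟨u', hcp', hsd⟩ := commPair_flip γ actF effF sigF hγcomm
            (fun x' y' e1 e2 => ih2 x' y' (by
              have h1 := psize_STr γ actF effF sigF
                (STr_of_mem γ actF effF sigF x hz1) x' e1
              have h2 := psize_STr γ actF effF sigF
                (STr_of_mem γ actF effF sigF y hz2) y' e2
              omega)) hcp
          exact ⟨smd u', List.mem_map.mpr ⟨u', List.mem_flatMap.mpr
            ⟨z2, hz2, List.mem_filterMap.mpr ⟨z1, hz1, hcp'⟩⟩, rfl⟩, hsd⟩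
        · intro z hz
          obtain ⟨u, hu, rfl⟩ := List.mem_map.mp hz
          obtain ⟨z1, hz1, hu2⟩ := List.mem_flatMap.mp hu
          obtain ⟨z2, hz2, hcp⟩ := List.mem_filterMap.mp hu2
          obtain ⟨u', hcp', hsd⟩ := commPair_flip γ actF effF sigF hγcomm
            (fun y' x' e1 e2 => ih2 y' x' (by
              have h1 := psize_STr γ actF effF sigF
                (STr_of_mem γ actF effF sigF y hz1) y' e1
              have h2 := psize_STr γ actF effF sigF
                (STr_of_mem γ actF effF sigF x hz2) x' e2
              omega)) hcp
          exact ⟨smd u', List.mem_map.mpr ⟨u', List.mem_flatMap.mpr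
            ⟨z2, hz2, List.mem_filterMap.mpr ⟨z1, hz1, hcp'⟩⟩, rfl⟩, hsd⟩
      refine .trans (.CM1 x y) ?_
      refine .trans (.altC (.A1 _ _) (.trans hcxy (.trans hmid (.symm hcyx)))) ?_
      exact .symm (.CM1 y x)

end Hnf3

end CtAux


namespace CtAux

attribute [local instance] Classical.propDecidable

instance : Fintype V3 where
  elems := {V3.t, V3.f, V3.b}
  complete := by intro x; cases x <;> decide

section Worlds

variable {α Act S : Type}
variable (γ : Option Act → Option Act → Option Act)
variable (actF : Option Act → S → Option Act) (effF : Option Act → S → S)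
variable (sigF : S → Fml α)

local infix:50 " ⋍ " => SDeriv γ actF effF sigF

/-- Per-variable selector formulas. -/
def selV : V3 → α → Fml α
  | .t, p => (Fml.var p).neg.imp .bot
  | .f, p => (Fml.var p).imp .bot
  | .b, p => (((Fml.var p).imp .bot).imp .bot).conj
      ((((Fml.var p).neg.imp .bot).imp .bot))

theorem selV_eval (σ : α → V3) (v : V3) (p : α) :
    eval σ (selV v p) = if σ p = v then .t else .f := by
  cases v <;> cases h : σ p <;> simp [selV, eval, negT, impT, conjT, h]

/-- Conjunction of a list of formulas. -/
def conjL : List (Fml α) → Fml α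
  | [] => Fml.top
  | A :: l => A.conj (conjL l)

theorem conjL_eval_t {σ : α → V3} {l : List (Fml α)}
    (h : ∀ A ∈ l, eval σ A = .t) : eval σ (conjL l) = .t := by
  induction l with
  | nil => rfl
  | cons A l ih =>
    have hA := h A (List.mem_cons_self)
    have hl := ih fun B hB => h B (List.mem_cons_of_mem _ hB)
    simp [conjL, eval, hA, hl, conjT]

theorem conjL_eval_f {σ : α → V3} {l : List (Fml α)} {A : Fml α}
    (hA : A ∈ l) (h : eval σ A = .f) : eval σ (conjL l) = .f := by
  induction l with
  | nil => exact absurd hA (List.not_mem_nil)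
  | cons B l ih =>
    rcases List.mem_cons.mp hA with rfl | hA'
    · simp [conjL, eval, h, conjT]
    · have := ih hA'
      simp only [conjL, eval, this]
      cases eval σ B <;> rfl

/-- Disjunction of a list of formulas. -/
def disjL : List (Fml α) → Fml α
  | [] => .bot
  | A :: l => A.disj (disjL l)

theorem disjL_eval_f {σ : α → V3} {l : List (Fml α)}
    (h : ∀ A ∈ l, eval σ A = .f) : eval σ (disjL l) = .f := by
  induction l with
  | nil => rfl
  | cons A l ih =>
    have hA := h A (List.mem_cons_self)
    have hl := ih fun B hB => h B (List.mem_cons_of_mem _ hB)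
    simp [disjL, eval, hA, hl, disjT]

theorem disjL_eval_v {σ : α → V3} {l : List (Fml α)} {v : V3} (hv : v ≠ .f)
    (hall : ∀ A ∈ l, eval σ A = .f ∨ eval σ A = v)
    (hex : ∃ A ∈ l, eval σ A = v) : eval σ (disjL l) = v := by
  induction l with
  | nil => obtain ⟨A, hA, _⟩ := hex; exact absurd hA (List.not_mem_nil)
  | cons A l ih =>
    simp only [disjL, eval]
    rcases hall A (List.mem_cons_self) with hAf | hAv
    · rw [hAf]
      have hex' : ∃ B ∈ l, eval σ B = v := by
        obtain ⟨B, hB, hBv⟩ := hex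
        rcases List.mem_cons.mp hB with rfl | hB'
        · rw [hAf] at hBv; exact absurd hBv.symm hv
        · exact ⟨B, hB', hBv⟩
      rw [ih (fun B hB => hall B (List.mem_cons_of_mem _ hB)) hex']
      cases v <;> simp [disjT] <;> rfl
    · rw [hAv]
      by_cases hexl : ∃ B ∈ l, eval σ B = v
      · rw [ih (fun B hB => hall B (List.mem_cons_of_mem _ hB)) hexl]
        cases v <;> simp [disjT] <;> rfl
      · have hlf : ∀ B ∈ l, eval σ B = .f := by
          intro B hB
          rcases hall B (List.mem_cons_of_mem _ hB) with h | h
          · exact h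
          · exact absurd ⟨B, hB, h⟩ hexl
        rw [disjL_eval_f hlf]
        cases v <;> simp [disjT] <;> rfl

variable [Fintype α]

/-- The list of all valuations. -/
noncomputable def worldList : List (α → V3) :=
  (Finset.univ : Finset (α → V3)).toList

theorem mem_worldList (σ : α → V3) : σ ∈ (worldList : List (α → V3)) :=
  Finset.mem_toList.mpr (Finset.mem_univ σ)

/-- The crisp characteristic formula of a valuation. -/
noncomputable def chi0 (σ : α → V3) : Fml α :=
  conjL ((Finset.univ : Finset α).toList.map fun p => selV (σ p) p)

theorem chi0_eval_self (σ : α → V3) : eval σ (chi0 σ) = .t := by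
  apply conjL_eval_t
  intro A hA
  obtain ⟨p, _, rfl⟩ := List.mem_map.mp hA
  simp [selV_eval]

theorem chi0_eval_ne {σ σ' : α → V3} (h : σ' ≠ σ) : eval σ' (chi0 σ) = .f := by
  have : ∃ p, σ' p ≠ σ p := by
    by_contra hc
    push_neg at hc
    exact h (funext hc)
  obtain ⟨p, hp⟩ := this
  refine conjL_eval_f (A := selV (σ p) p) ?_ ?_
  · exact List.mem_map.mpr ⟨p, Finset.mem_toList.mpr (Finset.mem_univ p), rfl⟩
  · rw [selV_eval, if_neg hp]

/-- A formula with value b at σ (if some variable has value b there). -/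
noncomputable def bWit (σ : α → V3) : Fml α :=
  if h : ∃ p, σ p = .b then (Fml.var h.choose).conj (Fml.var h.choose).neg else .bot

/-- The characteristic formula of (σ, v). -/
noncomputable def chiV (σ : α → V3) : V3 → Fml α
  | .t => chi0 σ
  | .f => .bot
  | .b => (chi0 σ).conj (bWit σ)

theorem chiV_eval_ne {σ σ' : α → V3} (h : σ' ≠ σ) (v : V3) :
    eval σ' (chiV σ v) = .f := by
  cases v with
  | t => exact chi0_eval_ne h
  | f => rfl
  | b => simp [chiV, eval, chi0_eval_ne h, conjT]

theorem chiV_eval_self (σ : α → V3) {v : V3} (hv : v ≠ .f)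
    (hb : v = .b → ∃ p, σ p = .b) : eval σ (chiV σ v) = v := by
  cases v with
  | t => exact chi0_eval_self σ
  | f => exact absurd rfl hv
  | b =>
    have hex := hb rfl
    have : eval σ (bWit σ) = .b := by
      rw [bWit, dif_pos hex]
      have := hex.choose_spec
      simp [eval, this, negT, conjT]
    simp [chiV, eval, chi0_eval_self σ, this, conjT]

theorem exists_b_of_eval_b {σ : α → V3} : ∀ {φ : Fml α},
    eval σ φ = .b → ∃ p, σ p = .b := by
  intro φ
  induction φ with
  | var p => intro h; exact ⟨p, h⟩
  | bot => intro h; cases h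
  | neg A ihA =>
    intro h
    simp only [eval] at h
    cases hA : eval σ A <;> rw [hA] at h <;> simp [negT] at h
    exact ihA hA
  | conj A B ihA ihB =>
    intro h
    simp only [eval] at h
    cases hA : eval σ A <;> cases hB : eval σ B <;> rw [hA, hB] at h <;>
      simp [conjT] at h
    all_goals first | exact ihA hA | exact ihB hB
  | disj A B ihA ihB =>
    intro h
    simp only [eval] at h
    cases hA : eval σ A <;> cases hB : eval σ B <;> rw [hA, hB] at h <;>
      simp [disjT] at h
    all_goals first | exact ihA hA | exact ihB hB
  | imp A B ihA ihB =>
    intro h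
    simp only [eval] at h
    cases hA : eval σ A <;> cases hB : eval σ B <;> rw [hA, hB] at h <;>
      simp [impT] at h
    all_goals first | exact ihA hA | exact ihB hB

theorem guard_feq (φ : Fml α) :
    FEquiv φ (disjL ((worldList.filter fun σ => eval σ φ ≠ V3.f).map
      (fun σ => chiV σ (eval σ φ)))) := by
  intro σ'
  by_cases hf : eval σ' φ = .f
  · rw [hf]
    refine (disjL_eval_f ?_).symm
    intro A hA
    obtain ⟨σ, hσ, rfl⟩ := List.mem_map.mp hA
    have hσ' : σ' ≠ σ := by
      rintro rfl
      rw [List.mem_filter] at hσ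
      exact (of_decide_eq_true hσ.2) hf
    exact chiV_eval_ne hσ' _
  · refine (disjL_eval_v hf ?_ ?_).symm
    · intro A hA
      obtain ⟨σ, hσ, rfl⟩ := List.mem_map.mp hA
      by_cases he : σ' = σ
      · subst he
        exact Or.inr (chiV_eval_self σ' hf (fun hb => exists_b_of_eval_b hb))
      · exact Or.inl (chiV_eval_ne he _)
    · refine ⟨chiV σ' (eval σ' φ), List.mem_map.mpr ⟨σ', ?_, rfl⟩,
        chiV_eval_self σ' hf (fun hb => exists_b_of_eval_b hb)⟩
      rw [List.mem_filter]
      exact ⟨mem_worldList σ', decide_eq_true hf⟩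

theorem gc_disjL (l : List (Fml α)) (W : SPT α Act S) :
    SPT.gc (disjL l) W ⋍ sumL (l.map fun A => .gc A W) := by
  induction l with
  | nil => exact .GC2 W
  | cons A l ih => exact .trans (.GC7 _ _ _) (.altC (.refl _) ih)

/-- Splitting a guard along all valuations. -/
theorem guard_split (φ : Fml α) (W : SPT α Act S) :
    SPT.gc φ W ⋍ sumL ((worldList.filter fun σ => eval σ φ ≠ V3.f).map
      (fun σ => .gc (chiV σ (eval σ φ)) W)) := by
  refine .trans (gc_fequiv γ actF effF sigF (guard_feq φ) (.refl W)) ?_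
  refine .trans (gc_disjL γ actF effF sigF _ W) ?_
  rw [List.map_map]
  exact .refl _

theorem sum_flat_point {A : Type} {l : List A} {f : A → SPT α Act S}
    {g : A → List (SPT α Act S)} (h : ∀ z ∈ l, f z ⋍ sumL (g z)) :
    sumL (l.map f) ⋍ sumL (l.flatMap g) := by
  induction l with
  | nil => exact .refl _
  | cons z l ih =>
    rw [List.flatMap_cons]
    refine .trans (.altC (h z (List.mem_cons_self))
      (ih fun u hu => h u (List.mem_cons_of_mem _ hu))) ?_
    exact .symm (sumL_append γ actF effF sigF _ _)

theorem se_delete {Φ χ : Fml α} (hbot : EqBot (Φ.conj χ)) (X W : SPT α Act S) :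
    SPT.se Φ (.alt X (.gc χ W)) ⋍ .se Φ X := by
  refine .trans (.symm (.SE7 Φ _)) ?_
  refine .trans (.seC (.refl Φ) (.GC4 Φ X (.gc χ W))) ?_
  refine .trans (.seC (.refl Φ) (.altC (.refl _)
    (.trans (.GC6 Φ χ W) (gc_bot γ actF effF sigF hbot W)))) ?_
  refine .trans (.seC (.refl Φ) (.A6 _)) ?_
  exact .SE7 Φ X

theorem se_prune {Φ : Fml α} {A : Type} (P : A → Bool) (χf : A → Fml α)
    (Wf : A → SPT α Act S) :
    ∀ (l : List A), (∀ z ∈ l, P z = false → EqBot (Φ.conj (χf z))) →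
      ∀ X, SPT.se Φ (.alt X (sumL (l.map fun z => .gc (χf z) (Wf z)))) ⋍
        .se Φ (.alt X (sumL ((l.filter P).map fun z => .gc (χf z) (Wf z)))) := by
  intro l
  induction l with
  | nil => intro _ X; exact .refl _
  | cons z l ih =>
    intro H X
    have Hl := fun u hu => H u (List.mem_cons_of_mem _ hu)
    rcases hP : P z with _ | _
    · rw [List.filter_cons_of_neg (by simp [hP])]
      -- delete z
      refine .trans (.seC (.refl Φ) (.trans (.altC (.refl X) (.A1 _ _))
        (.symm (.A2 _ _ _)))) ?_
      refine .trans (se_delete γ actF effF sigF (H z (List.mem_cons_self) hP) _ _) ?_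
      exact ih Hl X
    · rw [List.filter_cons_of_pos (by simp [hP])]
      refine .trans (.seC (.refl Φ) (.symm (.A2 _ _ _))) ?_
      refine .trans (ih Hl (.alt X (.gc (χf z) (Wf z)))) ?_
      exact .seC (.refl Φ) (.A2 _ _ _)

theorem se_prune' {Φ : Fml α} {A : Type} (P : A → Bool) (χf : A → Fml α)
    (Wf : A → SPT α Act S) (l : List A)
    (H : ∀ z ∈ l, P z = false → EqBot (Φ.conj (χf z))) :
    SPT.se Φ (sumL (l.map fun z => .gc (χf z) (Wf z))) ⋍
      .se Φ (sumL ((l.filter P).map fun z => .gc (χf z) (Wf z))) := by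
  refine .trans (.seC (.refl Φ) (.symm (alt_delta_left γ actF effF sigF _))) ?_
  refine .trans (se_prune γ actF effF sigF P χf Wf l H .delta) ?_
  exact .seC (.refl Φ) (alt_delta_left γ actF effF sigF _)

end Worlds

end CtAux


namespace CtAux

attribute [local instance] Classical.propDecidable

section Final

variable {α Act S : Type}
variable (γ : Option Act → Option Act → Option Act)
variable (actF : Option Act → S → Option Act) (effF : Option Act → S → S)
variable (sigF : S → Fml α)

local infix:50 " ⋍ " => SDeriv γ actF effF sigF

variable [Fintype α]

/-- The process term of an atom (a transition together with a valuation). -/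
noncomputable def atomTm (w : (Fml α × Act × Option (SPT α Act S)) × (α → V3)) :
    SPT α Act S :=
  .gc (chiV w.2 (eval w.2 w.1.1)) (tgt w.1.2.1 w.1.2.2)

/-- All atoms of a process: transitions split along the valuations where they
are enabled and where the signal of the process is not false. -/
noncomputable def atomList (p : SPT α Act S) :
    List ((Fml α × Act × Option (SPT α Act S)) × (α → V3)) :=
  ((transList γ actF effF sigF p).flatMap fun z =>
    (worldList.filter fun σ => eval σ z.1 ≠ V3.f).map fun σ => (z, σ)).filter
    fun w => eval w.2 (sigS sigF p) ≠ V3.f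

theorem atom_expand (hγcomm : ∀ a b, γ a b = γ b a)
    (hγdelta : ∀ a, γ none a = none) (hactdelta : ∀ s, actF none s = none)
    (p : SPT α Act S) :
    p ⋍ .se (sigS sigF p) (sumL ((atomList γ actF effF sigF p).map
      (atomTm))) := by
  have h0 := (grand γ actF effF sigF hγcomm hγdelta hactdelta (psize p)).1 p le_rfl
  refine .trans h0 ?_
  rw [hnf]
  refine .trans (.seC (.refl _) (sum_flat_point γ actF effF sigF
    (g := fun z => (worldList.filter fun σ => eval σ z.1 ≠ V3.f).map
      fun σ => atomTm (z, σ))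
    (fun z _ => by
      obtain ⟨φ, a, o⟩ := z
      exact guard_split γ actF effF sigF φ (tgt a o)))) ?_
  have e : ((transList γ actF effF sigF p).flatMap fun z =>
      ((worldList.filter fun σ => eval σ z.1 ≠ V3.f).map
        fun σ => atomTm (z, σ))) =
      ((transList γ actF effF sigF p).flatMap fun z =>
        ((worldList.filter fun σ => eval σ z.1 ≠ V3.f).map fun σ => (z, σ))).map
          (atomTm) := by
    rw [List.map_flatMap]
    simp only [List.map_map]
    rfl
  rw [e, atomList]
  refine se_prune' γ actF effF sigF _
    (fun (w : (Fml α × Act × Option (SPT α Act S)) × (α → V3)) =>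
      chiV w.2 (eval w.2 w.1.1))
    (fun (w : (Fml α × Act × Option (SPT α Act S)) × (α → V3)) =>
      tgt w.1.2.1 w.1.2.2) _ ?_
  intro w _ hP
  have hf : eval w.2 (sigS sigF p) = V3.f := by
    have := of_decide_eq_false hP
    simpa using this
  intro σ'
  by_cases he : σ' = w.2
  · rw [he]
    simp only [eval, hf]
    cases eval w.2 (chiV w.2 (eval w.2 w.1.1)) <;> rfl
  · simp only [eval, chiV_eval_ne he]
    cases eval σ' (sigS sigF p) <;> rfl

theorem completeness_aux (hγcomm : ∀ a b, γ a b = γ b a)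
    (hγdelta : ∀ a, γ none a = none) (hactdelta : ∀ s, actF none s = none) :
    ∀ n (p q : SPT α Act S), psize p + psize q ≤ n →
      SBisim γ actF effF sigF p q → p ⋍ q := by
  intro n
  induction n with
  | zero =>
    intro p q hs _
    have := psize_pos p
    have := psize_pos q
    omega
  | succ n ih =>
    intro p q hs hbis
    obtain ⟨R, hR, hpq⟩ := hbis
    obtain ⟨hfwd, hsigpq⟩ := (hR p q hpq).1
    obtain ⟨hbwd, -⟩ := (hR p q hpq).2
    refine .trans (atom_expand γ actF effF sigF hγcomm hγdelta hactdelta p) ?_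
    refine .trans ?_ (.symm (atom_expand γ actF effF sigF hγcomm hγdelta hactdelta q))
    refine .trans (se_fequiv γ actF effF sigF hsigpq (.refl _)) ?_
    refine .seC (.refl _) (sum_ext γ actF effF sigF ?_ ?_)
    · intro zz hzz
      obtain ⟨w, hw, rfl⟩ := List.mem_map.mp hzz
      rw [atomList, List.mem_filter] at hw
      obtain ⟨hw1, hwP⟩ := hw
      obtain ⟨z, hzT, hw2⟩ := List.mem_flatMap.mp hw1
      obtain ⟨σ, hσ, rfl⟩ := List.mem_map.mp hw2
      obtain ⟨φ, a, o⟩ := z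
      rw [List.mem_filter] at hσ
      have hφf : eval σ φ ≠ V3.f := by have := of_decide_eq_true hσ.2; simpa using this
      have hsf : eval σ (sigS sigF p) ≠ V3.f := by
        have := of_decide_eq_true hwP; simpa using this
      have hstr : STr γ actF effF sigF p φ a o := STr_of_mem γ actF effF sigF p hzT
      obtain ⟨ψ, o', hval, hstr', hRo⟩ := hfwd φ a o hstr σ hsf hφf
      have hmemq : ((ψ, a, o'), σ) ∈ atomList γ actF effF sigF q := by
        rw [atomList, List.mem_filter]
        constructor
        · refine List.mem_flatMap.mpr ⟨(ψ, a, o'), mem_of_STr γ actF effF sigF hstr', ?_⟩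
          refine List.mem_map.mpr ⟨σ, ?_, rfl⟩
          rw [List.mem_filter]
          refine ⟨mem_worldList σ, decide_eq_true ?_⟩
          show eval σ ψ ≠ V3.f
          rw [hval]; exact hφf
        · refine decide_eq_true ?_
          show eval σ (sigS sigF q) ≠ V3.f
          intro hc
          exact hsf ((hsigpq σ).trans hc)
      refine ⟨atomTm ((ψ, a, o'), σ),
        List.mem_map.mpr ⟨_, hmemq, rfl⟩, ?_⟩
      have heq : atomTm ((ψ, a, o'), σ) =
          SPT.gc (chiV σ (eval σ φ)) (tgt a o') := by
        simp only [atomTm]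
        rw [hval]
      rw [heq]
      cases o with
      | none =>
        cases o' with
        | none => exact .refl _
        | some q' => exact absurd hRo (by simp [SOptR])
      | some p' =>
        cases o' with
        | none => exact absurd hRo (by simp [SOptR])
        | some q' =>
          have hb' : SBisim γ actF effF sigF p' q' := ⟨R, hR, hRo⟩
          have h1 := psize_STr γ actF effF sigF hstr p' rfl
          have h2 := psize_STr γ actF effF sigF hstr' q' rfl
          exact .gcC (.refl _) (.seqC (.refl _) (ih p' q' (by omega) hb'))
    · intro zz hzz
      obtain ⟨w, hw, rfl⟩ := List.mem_map.mp hzz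
      rw [atomList, List.mem_filter] at hw
      obtain ⟨hw1, hwP⟩ := hw
      obtain ⟨z, hzT, hw2⟩ := List.mem_flatMap.mp hw1
      obtain ⟨σ, hσ, rfl⟩ := List.mem_map.mp hw2
      obtain ⟨φ, a, o⟩ := z
      rw [List.mem_filter] at hσ
      have hφf : eval σ φ ≠ V3.f := by have := of_decide_eq_true hσ.2; simpa using this
      have hsf : eval σ (sigS sigF q) ≠ V3.f := by
        have := of_decide_eq_true hwP; simpa using this
      have hstr : STr γ actF effF sigF q φ a o := STr_of_mem γ actF effF sigF q hzT
      obtain ⟨ψ, o', hval, hstr', hRo⟩ := hbwd φ a o hstr σ hsf hφf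
      have hmemp : ((ψ, a, o'), σ) ∈ atomList γ actF effF sigF p := by
        rw [atomList, List.mem_filter]
        constructor
        · refine List.mem_flatMap.mpr ⟨(ψ, a, o'), mem_of_STr γ actF effF sigF hstr', ?_⟩
          refine List.mem_map.mpr ⟨σ, ?_, rfl⟩
          rw [List.mem_filter]
          refine ⟨mem_worldList σ, decide_eq_true ?_⟩
          show eval σ ψ ≠ V3.f
          rw [hval]; exact hφf
        · refine decide_eq_true ?_
          show eval σ (sigS sigF p) ≠ V3.f
          intro hc
          exact hsf ((hsigpq σ).symm.trans hc)
      refine ⟨atomTm ((ψ, a, o'), σ),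
        List.mem_map.mpr ⟨_, hmemp, rfl⟩, ?_⟩
      have heq : atomTm ((ψ, a, o'), σ) =
          SPT.gc (chiV σ (eval σ φ)) (tgt a o') := by
        simp only [atomTm]
        rw [hval]
      rw [heq]
      cases o with
      | none =>
        cases o' with
        | none => exact .refl _
        | some p' => exact absurd hRo (by simp [SOptR])
      | some q' =>
        cases o' with
        | none => exact absurd hRo (by simp [SOptR])
        | some p' =>
          have hb' : SBisim γ actF effF sigF p' q' := ⟨R, hR, hRo⟩
          have h1 := psize_STr γ actF effF sigF hstr q' rfl
          have h2 := psize_STr γ actF effF sigF hstr' p' rfl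
          exact .gcC (.refl _) (.seqC (.refl _) (.symm (ih p' q' (by omega) hb')))

end Final

end CtAux

/-- Completeness of ctACPps+SO with respect to bisimulation equivalence. -/
theorem ctACPpsSO_completeness {α Act S : Type} [Fintype α] [Fintype Act]
    (γ : Option Act → Option Act → Option Act)
    (hγcomm : ∀ a b, γ a b = γ b a)
    (hγassoc : ∀ a b c, γ (γ a b) c = γ a (γ b c))
    (hγdelta : ∀ a, γ none a = none)
    (actF : Option Act → S → Option Act) (effF : Option Act → S → S)
    (sigF : S → Fml α)
    (hactdelta : ∀ s, actF none s = none)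
    (p q : SPT α Act S) (h : SBisim γ actF effF sigF p q) :
    SDeriv γ actF effF sigF p q :=
  CtAux.completeness_aux γ actF effF sigF hγcomm hγdelta hactdelta
    (CtAux.psize p + CtAux.psize q) p q le_rfl h
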